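/- arXiv:math/0605306 — 7 statements merged into one kernel-verified Lean document; each statement's English description precedes it below -/
import Mathlib

section
/- Let ρ be a normalized near weight on R and let f, g ∈ R \ {0} with ρ(f) > 0 and ρ(g) = 0. Then there exists λ ∈ F such that ρ(f·(g − λ·1)) < ρ(f). -/
structure NearWeight (F R : Type*) [Field F] [CommRing R] [Algebra F R] where
  w : R → WithBot ℕ
  N0 : ∀ f : R, w f = ⊥ ↔ f = 0
  N1 : ∀ (c : F) (f : R), c ≠ 0 → w (c • f) = w f
  N2 : ∀ f g : R, w (f + g) ≤ max (w f) (w g)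
  N3 : ∀ f g h : R, w f < w g → w (f * h) ≤ w (g * h)
  N3' : ∀ f g h : R, w f < w g → w 1 < w h → w (f * h) < w (g * h)
  N4 : ∀ f g : R, w 1 < w f → w 1 < w g → w f = w g →
      ∃ c : F, c ≠ 0 ∧ w (f - c • g) < w f
  N5 : ∀ f g : R, w (f * g) ≤ w f + w g
  N5' : ∀ f g : R, w 1 < w f → w 1 < w g → w (f * g) = w f + w g
  norm0 : ∀ f : R, f ≠ 0 → w f ≤ w 1 → w f = 0
  normgcd : ∀ d : ℕ, (∀ f : R, w 1 < w f → ∃ k : ℕ, w f = ((d * k : ℕ) : WithBot ℕ)) → d = 1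

namespace NearWeight

variable {F R : Type*} [Field F] [CommRing R] [Algebra F R]

def U (ρ : NearWeight F R) : Set R := {r | ρ.w r ≤ ρ.w 1}

def M (ρ : NearWeight F R) : Set R := {r | ρ.w 1 < ρ.w r}

def nval (ρ : NearWeight F R) (f : R) : ℕ := WithBot.unbotD 0 (ρ.w f)

def Hset (ρ σ : NearWeight F R) (S : Set R) : Set (ℕ × ℕ) :=
  {p | ∃ f ∈ S, f ≠ 0 ∧ (ρ.nval f, σ.nval f) = p}

def WellAgreeing (ρ σ : NearWeight F R) : Prop :=
  (Hset ρ σ Set.univ)ᶜ.Finite ∧ ρ.U ∩ σ.U = Set.range (algebraMap F R)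

noncomputable def xH (ρ σ : NearWeight F R) (n : ℕ) : ℕ :=
  sInf {m | (m, n) ∈ Hset ρ σ Set.univ}

noncomputable def yH (ρ σ : NearWeight F R) (n : ℕ) : ℕ :=
  sInf {m | (n, m) ∈ Hset ρ σ Set.univ}

def lub (a b : ℕ × ℕ) : ℕ × ℕ := (max a.1 b.1, max a.2 b.2)

noncomputable def Gamma (ρ σ : NearWeight F R) : Set (ℕ × ℕ) :=
  {p | ∃ m : ℕ, p = (m, yH ρ σ m)} ∪ {p | ∃ n : ℕ, p = (xH ρ σ n, n)}

def Hbarx (ρ σ : NearWeight F R) : Set ℕ := {m | (m, 0) ∈ Hset ρ σ Set.univ}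

def Hbary (ρ σ : NearWeight F R) : Set ℕ := {n | (0, n) ∈ Hset ρ σ Set.univ}

noncomputable def GammaTilde (ρ σ : NearWeight F R) : Set (ℕ × ℕ) :=
  {p | ∃ m : ℕ, m ∉ Hbarx ρ σ ∧ p = (m, yH ρ σ m)}

def Delta (p : ℕ × ℕ) : Set (ℕ × ℕ) :=
  {q | (q.1 = p.1 ∧ q.2 < p.2) ∨ (q.2 = p.2 ∧ q.1 < p.1)}

noncomputable def tw (ρ : NearWeight F R) (f : R) : ℤ :=
  sInf {z : ℤ | ∃ g ∈ ρ.M, z = (ρ.nval (f * g) : ℤ) - (ρ.nval g : ℤ)}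

end NearWeight

variable {F R : Type*} [Field F] [CommRing R] [Algebra F R]

theorem stmt0
    (hinj : Function.Injective (algebraMap F R))
    (hsur : ¬ Function.Surjective (algebraMap F R))
    (ρ : NearWeight F R) (f g : R) (hf : f ≠ 0) (hg : g ≠ 0)
    (hρf : 0 < ρ.w f) (hρg : ρ.w g = 0) :
    ∃ c : F, ρ.w (f * (g - c • (1 : R))) < ρ.w f := by
  have h10 : (1 : R) ≠ 0 := fun h => one_ne_zero (hinj (by simp [h] : algebraMap F R 1 = algebraMap F R 0))
  have h1 : ρ.w 1 = 0 := ρ.norm0 1 h10 le_rfl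
  by_cases hfg : ρ.w (f * g) < ρ.w f
  · refine ⟨0, ?_⟩
    simpa using hfg
  · push_neg at hfg
    have hle : ρ.w (f * g) ≤ ρ.w f := by
      have h := ρ.N5 f g
      rwa [hρg, add_zero] at h
    have heq : ρ.w (f * g) = ρ.w f := le_antisymm hle hfg
    have hfM : ρ.w 1 < ρ.w f := by rw [h1]; exact hρf
    have hfgM : ρ.w 1 < ρ.w (f * g) := heq ▸ hfM
    obtain ⟨c, _, hc⟩ := ρ.N4 (f * g) f hfgM hfM heq
    refine ⟨c, ?_⟩
    have hrw : f * (g - c • (1 : R)) = f * g - c • f := by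
      rw [mul_sub, mul_smul_comm, mul_one]
    rw [hrw]
    exact heq ▸ hc
end

section
/- Let ρ and σ be two well agreeing near weights on R and let n ∈ ℕ. If y_H(n) > 0, then x_H(y_H(n)) = n and n > 0. -/
variable {F R : Type*} [Field F] [CommRing R] [Algebra F R]


lemma aux_one_ne_zero (hinj : Function.Injective (algebraMap F R)) : (1:R) ≠ 0 := by
  intro h
  have : (algebraMap F R) 1 = (algebraMap F R) 0 := by simpa using h
  exact one_ne_zero (hinj this)

lemma aux_w_one (hinj : Function.Injective (algebraMap F R)) (ρ : NearWeight F R) :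
    ρ.w 1 = 0 :=
  ρ.norm0 1 (aux_one_ne_zero hinj) le_rfl

lemma aux_w_eq_nval (ρ : NearWeight F R) {f : R} (hf : f ≠ 0) :
    ρ.w f = (ρ.nval f : WithBot ℕ) := by
  obtain ⟨k, hk⟩ := WithBot.ne_bot_iff_exists.mp (fun h => hf ((ρ.N0 f).mp h))
  rw [← hk]
  simp only [NearWeight.nval, ← hk, WithBot.unbotD_coe]
  rfl

theorem stmt3
    (hinj : Function.Injective (algebraMap F R))
    (hsur : ¬ Function.Surjective (algebraMap F R))
    (ρ σ : NearWeight F R) (hwa : NearWeight.WellAgreeing ρ σ)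
    (n : ℕ) (hy : 0 < NearWeight.yH ρ σ n) :
    NearWeight.xH ρ σ (NearWeight.yH ρ σ n) = n ∧ 0 < n := by
  classical
  set b := NearWeight.yH ρ σ n with hb
  have h1 : (1:R) ≠ 0 := aux_one_ne_zero hinj
  have hw1ρ : ρ.w 1 = 0 := aux_w_one hinj ρ
  have hw1σ : σ.w 1 = 0 := aux_w_one hinj σ
  have hnval1ρ : ρ.nval 1 = 0 := by simp [NearWeight.nval, hw1ρ]
  have hnval1σ : σ.nval 1 = 0 := by simp [NearWeight.nval, hw1σ]
  -- the set defining yH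
  have hSyne : {m | (n, m) ∈ NearWeight.Hset ρ σ Set.univ}.Nonempty := by
    by_contra h
    rw [Set.not_nonempty_iff_eq_empty] at h
    have : b = 0 := by rw [hb, NearWeight.yH, h, Nat.sInf_empty]
    omega
  have hbmem : (n, b) ∈ NearWeight.Hset ρ σ Set.univ := Nat.sInf_mem hSyne
  have hnpos : 0 < n := by
    rcases Nat.eq_zero_or_pos n with h0 | h; swap; · exact h
    exfalso
    have h00 : (n, 0) ∈ NearWeight.Hset ρ σ Set.univ := by
      refine ⟨1, Set.mem_univ _, h1, ?_⟩
      rw [h0, hnval1ρ, hnval1σ]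
    have : b ≤ 0 := Nat.sInf_le h00
    omega
  refine ⟨?_, hnpos⟩
  -- xH b ≤ n
  have hxle : NearWeight.xH ρ σ b ≤ n := Nat.sInf_le hbmem
  have hSxne : {m | (m, b) ∈ NearWeight.Hset ρ σ Set.univ}.Nonempty := ⟨n, hbmem⟩
  have hxmem : (NearWeight.xH ρ σ b, b) ∈ NearWeight.Hset ρ σ Set.univ := Nat.sInf_mem hSxne
  rcases lt_or_eq_of_le hxle with hlt | heq; swap; · exact heq
  exfalso
  set m := NearWeight.xH ρ σ b with hm
  obtain ⟨f, -, hf0, hfval⟩ := hxmem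
  obtain ⟨g, -, hg0, hgval⟩ := hbmem
  have hfρ : ρ.nval f = m := by simpa using congrArg Prod.fst hfval
  have hfσ : σ.nval f = b := by simpa using congrArg Prod.snd hfval
  have hgρ : ρ.nval g = n := by simpa using congrArg Prod.fst hgval
  have hgσ : σ.nval g = b := by simpa using congrArg Prod.snd hgval
  have hwfρ : ρ.w f = (m : WithBot ℕ) := by rw [aux_w_eq_nval ρ hf0, hfρ]
  have hwfσ : σ.w f = (b : WithBot ℕ) := by rw [aux_w_eq_nval σ hf0, hfσ]
  have hwgρ : ρ.w g = (n : WithBot ℕ) := by rw [aux_w_eq_nval ρ hg0, hgρ]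
  have hwgσ : σ.w g = (b : WithBot ℕ) := by rw [aux_w_eq_nval σ hg0, hgσ]
  have hbpos : 0 < b := hy
  have hMf : σ.w 1 < σ.w f := by
    rw [hw1σ, hwfσ]; exact_mod_cast hbpos
  have hMg : σ.w 1 < σ.w g := by
    rw [hw1σ, hwgσ]; exact_mod_cast hbpos
  obtain ⟨c, hc0, hcw⟩ := σ.N4 f g hMf hMg (by rw [hwfσ, hwgσ])
  set h := f - c • g with hdefh
  have hh0 : h ≠ 0 := by
    intro h0
    have hfg : f = c • g := by rwa [hdefh, sub_eq_zero] at h0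
    have : ρ.w f = ρ.w g := by rw [hfg, ρ.N1 c g hc0]
    rw [hwfρ, hwgρ] at this
    exact absurd (by exact_mod_cast this) (Nat.ne_of_lt hlt)
  -- ρ.w h = n
  have hwcg : ρ.w (c • g) = (n : WithBot ℕ) := by rw [ρ.N1 c g hc0, hwgρ]
  have hwnegh : ρ.w (-h) = ρ.w h := by
    have : -h = (-1 : F) • h := by simp
    rw [this, ρ.N1 (-1) h (by norm_num)]
  have hub : ρ.w (c • g) ≤ max (ρ.w f) (ρ.w (-h)) := by
    have : c • g = f + -h := by rw [hdefh]; ring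
    rw [this]; exact ρ.N2 f (-h)
  have hwh_ge : (n : WithBot ℕ) ≤ ρ.w h := by
    rw [hwcg, hwnegh, hwfρ] at hub
    rcases max_cases ((m : WithBot ℕ)) (ρ.w h) with ⟨he, -⟩ | ⟨he, -⟩
    · rw [he] at hub
      exact absurd hub (not_le.mpr (by exact_mod_cast hlt))
    · rwa [he] at hub
  have hwh_le : ρ.w h ≤ (n : WithBot ℕ) := by
    have hneg : ρ.w (-(c • g)) = (n : WithBot ℕ) := by
      have : -(c • g) = (-c) • g := by simp
      rw [this, ρ.N1 (-c) g (neg_ne_zero.mpr hc0), hwgρ]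
    have : ρ.w h ≤ max (ρ.w f) (ρ.w (-(c • g))) := by
      have he : h = f + -(c • g) := by rw [hdefh]; ring
      rw [he]; exact ρ.N2 f _
    rw [hwfρ, hneg] at this
    refine this.trans ?_
    exact max_le (by exact_mod_cast (le_of_lt hlt)) le_rfl
  have hwh : ρ.w h = (n : WithBot ℕ) := le_antisymm hwh_le hwh_ge
  have hhρ : ρ.nval h = n := by
    have := aux_w_eq_nval ρ hh0
    rw [hwh] at this
    exact_mod_cast this.symm
  -- σ.nval h < b
  have hwhσ : σ.w h = (σ.nval h : WithBot ℕ) := aux_w_eq_nval σ hh0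
  have hhσlt : σ.nval h < b := by
    rw [hwhσ, hwfσ] at hcw
    exact_mod_cast hcw
  have hmem : (n, σ.nval h) ∈ NearWeight.Hset ρ σ Set.univ :=
    ⟨h, Set.mem_univ _, hh0, by rw [hhρ]⟩
  have : b ≤ σ.nval h := Nat.sInf_le hmem
  omega
end

section
/- Let ρ and σ be two well agreeing near weights on R. Then H = {lub(a, b) : a, b ∈ Γ}. -/
namespace NearWeight

variable {F R : Type*} [Field F] [CommRing R] [Algebra F R]

lemma w_eq_nval (ρ : NearWeight F R) {f : R} (hf : f ≠ 0) :
    ρ.w f = (ρ.nval f : WithBot ℕ) := by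
  cases h : ρ.w f with
  | bot => exact absurd ((ρ.N0 f).mp h) hf
  | coe n =>
    simp only [NearWeight.nval, h, WithBot.unbotD_coe]
    exact_mod_cast rfl

lemma w_add_eq (ρ : NearWeight F R) (f g : R) (h : ρ.w f < ρ.w g) :
    ρ.w (f + g) = ρ.w g := by
  have hneg : ρ.w (-f) = ρ.w f := by
    have := ρ.N1 (-1 : F) f (by norm_num)
    simpa [neg_smul, one_smul] using this
  refine le_antisymm ((ρ.N2 f g).trans (by rw [max_eq_right h.le])) ?_
  by_contra hlt
  push_neg at hlt
  have hg : g = (f + g) + (-f) := by ring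
  have : ρ.w g ≤ max (ρ.w (f + g)) (ρ.w (-f)) := by
    conv_lhs => rw [hg]
    exact ρ.N2 _ _
  rw [hneg] at this
  exact absurd this (not_le.mpr (max_lt hlt h))

lemma exists_max (ρ σ : NearWeight F R) (f g : R) (hf : f ≠ 0) (hg : g ≠ 0) :
    ∃ h : R, h ≠ 0 ∧ ρ.w h = max (ρ.w f) (ρ.w g) ∧ σ.w h = max (σ.w f) (σ.w g) := by
  rcases lt_trichotomy (ρ.w f) (ρ.w g) with h1 | h1 | h1
  · rcases le_or_gt (σ.w f) (σ.w g) with h2 | h2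
    · exact ⟨g, hg, by rw [max_eq_right h1.le], by rw [max_eq_right h2]⟩
    · refine ⟨f + g, ?_, ?_, ?_⟩
      · intro h0
        have := w_add_eq ρ f g h1
        rw [h0, (ρ.N0 0).mpr rfl] at this
        exact hg ((ρ.N0 g).mp this.symm)
      · rw [w_add_eq ρ f g h1, max_eq_right h1.le]
      · rw [add_comm, w_add_eq σ g f h2, max_eq_left h2.le]
  · rcases le_or_gt (σ.w f) (σ.w g) with h2 | h2
    · exact ⟨g, hg, by rw [max_eq_right h1.le], by rw [max_eq_right h2]⟩
    · exact ⟨f, hf, by rw [max_eq_left h1.ge], by rw [max_eq_left h2.le]⟩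
  · rcases le_or_gt (σ.w g) (σ.w f) with h2 | h2
    · exact ⟨f, hf, by rw [max_eq_left h1.le], by rw [max_eq_left h2]⟩
    · refine ⟨g + f, ?_, ?_, ?_⟩
      · intro h0
        have := w_add_eq ρ g f h1
        rw [h0, (ρ.N0 0).mpr rfl] at this
        exact hf ((ρ.N0 f).mp this.symm)
      · rw [w_add_eq ρ g f h1, max_eq_left h1.le]
      · rw [add_comm, w_add_eq σ f g h2, max_eq_right h2.le]

lemma nat_coe_max (a b : ℕ) :
    max (a : WithBot ℕ) (b : WithBot ℕ) = ((max a b : ℕ) : WithBot ℕ) := by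
  rcases le_total a b with hle | hle
  · rw [max_eq_right (by exact_mod_cast hle : (a : WithBot ℕ) ≤ b), max_eq_right hle]
  · rw [max_eq_left (by exact_mod_cast hle : (b : WithBot ℕ) ≤ a), max_eq_left hle]

lemma lub_mem (ρ σ : NearWeight F R) {a b : ℕ × ℕ}
    (ha : a ∈ Hset ρ σ Set.univ) (hb : b ∈ Hset ρ σ Set.univ) :
    lub a b ∈ Hset ρ σ Set.univ := by
  obtain ⟨f, -, hf0, hfa⟩ := ha
  obtain ⟨g, -, hg0, hgb⟩ := hb
  obtain ⟨h, hh0, hρ, hσ⟩ := exists_max ρ σ f g hf0 hg0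
  refine ⟨h, Set.mem_univ h, hh0, ?_⟩
  rw [w_eq_nval ρ hf0, w_eq_nval ρ hg0] at hρ
  rw [w_eq_nval σ hf0, w_eq_nval σ hg0] at hσ
  rw [w_eq_nval ρ hh0] at hρ
  rw [w_eq_nval σ hh0] at hσ
  rw [nat_coe_max] at hρ hσ
  have h1 : ρ.nval h = max (ρ.nval f) (ρ.nval g) := by exact_mod_cast hρ
  have h2 : σ.nval h = max (σ.nval f) (σ.nval g) := by exact_mod_cast hσ
  subst hfa hgb
  simp [lub, h1, h2]

lemma gamma_subset (ρ σ : NearWeight F R) (hfin : (Hset ρ σ Set.univ)ᶜ.Finite) :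
    Gamma ρ σ ⊆ Hset ρ σ Set.univ := by
  rintro p (⟨m, rfl⟩ | ⟨n, rfl⟩)
  · have hne : {k | (m, k) ∈ Hset ρ σ Set.univ}.Nonempty := by
      by_contra hE
      rw [Set.not_nonempty_iff_eq_empty] at hE
      have hsub : (Set.range fun k : ℕ => (m, k)) ⊆ (Hset ρ σ Set.univ)ᶜ := by
        rintro q ⟨k, rfl⟩
        intro hq
        exact absurd hq (by simpa using Set.eq_empty_iff_forall_notMem.mp hE k)
      exact (Set.infinite_range_of_injective
        (fun k1 k2 hk => by simpa using hk)) (hfin.subset hsub)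
    exact Nat.sInf_mem hne
  · have hne : {k | (k, n) ∈ Hset ρ σ Set.univ}.Nonempty := by
      by_contra hE
      rw [Set.not_nonempty_iff_eq_empty] at hE
      have hsub : (Set.range fun k : ℕ => (k, n)) ⊆ (Hset ρ σ Set.univ)ᶜ := by
        rintro q ⟨k, rfl⟩
        intro hq
        exact absurd hq (by simpa using Set.eq_empty_iff_forall_notMem.mp hE k)
      exact (Set.infinite_range_of_injective
        (fun k1 k2 hk => by simpa using hk)) (hfin.subset hsub)
    exact Nat.sInf_mem hne

end NearWeight


variable {F R : Type*} [Field F] [CommRing R] [Algebra F R]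

theorem stmt5
    (hinj : Function.Injective (algebraMap F R))
    (hsur : ¬ Function.Surjective (algebraMap F R))
    (ρ σ : NearWeight F R) (hwa : NearWeight.WellAgreeing ρ σ) :
    NearWeight.Hset ρ σ Set.univ =
      {p | ∃ a ∈ NearWeight.Gamma ρ σ, ∃ b ∈ NearWeight.Gamma ρ σ,
        p = NearWeight.lub a b} := by
  ext p
  simp only [Set.mem_setOf_eq]
  constructor
  · intro hp
    have hyp : NearWeight.yH ρ σ p.1 ≤ p.2 :=
      Nat.sInf_le (by simpa using hp)
    have hxp : NearWeight.xH ρ σ p.2 ≤ p.1 :=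
      Nat.sInf_le (by simpa using hp)
    refine ⟨(p.1, NearWeight.yH ρ σ p.1), Or.inl ⟨p.1, rfl⟩,
      (NearWeight.xH ρ σ p.2, p.2), Or.inr ⟨p.2, rfl⟩, ?_⟩
    have : NearWeight.lub (p.1, NearWeight.yH ρ σ p.1) (NearWeight.xH ρ σ p.2, p.2)
        = (p.1, p.2) := by
      simp [NearWeight.lub, max_eq_left hxp, max_eq_right hyp]
    rw [this]
  · rintro ⟨a, ha, b, hb, rfl⟩
    exact NearWeight.lub_mem ρ σ
      (NearWeight.gamma_subset ρ σ hwa.1 ha)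
      (NearWeight.gamma_subset ρ σ hwa.1 hb)
end

section
/- Let ρ and σ be two well agreeing near weights on R. For each a ∈ Γ⁺ choose φ_a ∈ R \ {0} with (ρ(φ_a), σ(φ_a)) = a, and let R' := F[{φ_a : a ∈ Γ⁺}] be the F-subalgebra of R generated by these elements. Then H(R') = H(R). -/
namespace NearWeight

section Aux

variable {F R : Type*} [Field F] [CommRing R] [Algebra F R]

lemma w_one (ρ : NearWeight F R) (h1 : (1:R) ≠ 0) : ρ.w 1 = 0 :=
  ρ.norm0 1 h1 le_rfl

lemma nval_eq_of_w (ρ : NearWeight F R) {f : R} {k : ℕ} (h : ρ.w f = (k : ℕ)) :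
    ρ.nval f = k := by
  simp only [nval, h]
  rfl

lemma ne_zero_of_w (ρ : NearWeight F R) {f : R} {k : ℕ} (h : ρ.w f = (k : ℕ)) :
    f ≠ 0 := by
  intro hf0
  rw [(ρ.N0 f).mpr hf0] at h
  exact WithBot.bot_ne_coe h

lemma w_neg (ρ : NearWeight F R) (f : R) : ρ.w (-f) = ρ.w f := by
  have h := ρ.N1 (-1) f (by norm_num)
  rwa [neg_one_smul] at h

lemma w_add_of_lt (ρ : NearWeight F R) {f g : R} (h : ρ.w f < ρ.w g) :
    ρ.w (f + g) = ρ.w g := by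
  refine le_antisymm ((ρ.N2 f g).trans (max_le h.le le_rfl)) ?_
  have h3 := ρ.N2 (f + g) (-f)
  have he : f + g + -f = g := by ring
  rw [he, w_neg] at h3
  rcases le_max_iff.mp h3 with h4 | h4
  · exact h4
  · exact absurd (h4.trans_lt h) (lt_irrefl _)

lemma w_sub_of_lt (ρ : NearWeight F R) {f g : R} (h : ρ.w g < ρ.w f) :
    ρ.w (f - g) = ρ.w f := by
  have h2 := ρ.w_add_of_lt (f := -g) (g := f) (by rwa [w_neg])
  rwa [neg_add_eq_sub] at h2

lemma nval_add_of_ne (ρ : NearWeight F R) {f g : R} (hf : f ≠ 0) (hg : g ≠ 0)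
    (h : ρ.nval f ≠ ρ.nval g) :
    f + g ≠ 0 ∧ ρ.nval (f + g) = max (ρ.nval f) (ρ.nval g) := by
  rcases h.lt_or_gt with h | h
  · have hw : ρ.w f < ρ.w g := by
      rw [ρ.w_eq_nval hf, ρ.w_eq_nval hg]
      exact_mod_cast h
    have hadd := ρ.w_add_of_lt hw
    rw [ρ.w_eq_nval hg] at hadd
    exact ⟨ρ.ne_zero_of_w hadd, (ρ.nval_eq_of_w hadd).trans (max_eq_right h.le).symm⟩
  · have hw : ρ.w g < ρ.w f := by
      rw [ρ.w_eq_nval hf, ρ.w_eq_nval hg]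
      exact_mod_cast h
    have hadd := ρ.w_add_of_lt hw
    rw [add_comm g f, ρ.w_eq_nval hf] at hadd
    exact ⟨ρ.ne_zero_of_w hadd, (ρ.nval_eq_of_w hadd).trans (max_eq_left h.le).symm⟩

lemma lub_realize (ρ σ : NearWeight F R) (S : Subalgebra F R) {a b : ℕ × ℕ}
    (ha : a ∈ Hset ρ σ (S : Set R)) (hb : b ∈ Hset ρ σ (S : Set R)) :
    (max a.1 b.1, max a.2 b.2) ∈ Hset ρ σ (S : Set R) := by
  obtain ⟨f, hfS, hf0, hfp⟩ := ha
  obtain ⟨g, hgS, hg0, hgp⟩ := hb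
  subst hfp
  subst hgp
  rcases eq_or_ne (ρ.nval f) (ρ.nval g) with h1 | h1
  · rcases le_total (σ.nval f) (σ.nval g) with h2 | h2
    · exact ⟨g, hgS, hg0, by
        simp only [max_eq_right h1.le, max_eq_right h2]⟩
    · exact ⟨f, hfS, hf0, by
        simp only [max_eq_left h1.ge, max_eq_left h2]⟩
  · rcases eq_or_ne (σ.nval f) (σ.nval g) with h2 | h2
    · rcases le_total (ρ.nval f) (ρ.nval g) with h3 | h3
      · exact ⟨g, hgS, hg0, by
          simp only [max_eq_right h3, max_eq_right h2.le]⟩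
      · exact ⟨f, hfS, hf0, by
          simp only [max_eq_left h3, max_eq_left h2.ge]⟩
    · obtain ⟨hne, hρadd⟩ := ρ.nval_add_of_ne hf0 hg0 h1
      obtain ⟨-, hσadd⟩ := σ.nval_add_of_ne hf0 hg0 h2
      exact ⟨f + g, S.add_mem hfS hgS, hne, by rw [hρadd, hσadd]⟩

lemma prod_realize (ρ σ : NearWeight F R) (h1 : (1:R) ≠ 0)
    (hU : ρ.U ∩ σ.U = Set.range (algebraMap F R))
    {f g : R} (hf : f ≠ 0) (hg : g ≠ 0) (hsf : σ.w f = 0) (hsg : σ.w g = 0) :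
    f * g ≠ 0 ∧ ρ.nval (f * g) = ρ.nval f + ρ.nval g ∧ σ.w (f * g) = 0 := by
  have hσ1 : σ.w 1 = 0 := σ.w_one h1
  have hρ1 : ρ.w 1 = 0 := ρ.w_one h1
  have key : ∀ u v : R, u ≠ 0 → v ≠ 0 → σ.w u = 0 → ρ.w u ≤ ρ.w 1 →
      u * v ≠ 0 ∧ ρ.w (u * v) = ρ.w v ∧ σ.w (u * v) = σ.w v ∧ ρ.nval u = 0 := by
    intro u v hu hv hsu huU
    have hmem : u ∈ Set.range (algebraMap F R) := by
      rw [← hU]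
      exact ⟨huU, le_of_eq (hsu.trans hσ1.symm)⟩
    obtain ⟨c, hc⟩ := hmem
    have hc0 : c ≠ 0 := by
      rintro rfl
      rw [map_zero] at hc
      exact hu hc.symm
    have hsmul : u * v = c • v := by rw [Algebra.smul_def, hc]
    have hwρ : ρ.w (u * v) = ρ.w v := by rw [hsmul, ρ.N1 c v hc0]
    have hwσ : σ.w (u * v) = σ.w v := by rw [hsmul, σ.N1 c v hc0]
    have huv : u * v ≠ 0 := by
      intro h0
      apply hv
      apply (ρ.N0 v).mp
      rw [← hwρ, (ρ.N0 (u * v)).mpr h0]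
    have hnu : ρ.nval u = 0 := ρ.nval_eq_of_w (k := 0) (by
      rw [ρ.norm0 u hu huU]; rfl)
    exact ⟨huv, hwρ, hwσ, hnu⟩
  rcases le_or_gt (ρ.w f) (ρ.w 1) with hA | hA
  · obtain ⟨huv, hwρ, hwσ, hnu⟩ := key f g hf hg hsf hA
    refine ⟨huv, ?_, by rw [hwσ, hsg]⟩
    rw [hnu, zero_add]
    show WithBot.unbotD 0 (ρ.w (f * g)) = WithBot.unbotD 0 (ρ.w g)
    rw [hwρ]
  · rcases le_or_gt (ρ.w g) (ρ.w 1) with hB | hB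
    · obtain ⟨huv, hwρ, hwσ, hnu⟩ := key g f hg hf hsg hB
      rw [mul_comm g f] at huv hwρ hwσ
      refine ⟨huv, ?_, by rw [hwσ, hsf]⟩
      rw [hnu, add_zero]
      show WithBot.unbotD 0 (ρ.w (f * g)) = WithBot.unbotD 0 (ρ.w f)
      rw [hwρ]
    · have h5 : ρ.w (f * g) = ((ρ.nval f + ρ.nval g : ℕ) : WithBot ℕ) := by
        rw [ρ.N5' f g hA hB, ρ.w_eq_nval hf, ρ.w_eq_nval hg]
        push_cast
        ring
      have huv : f * g ≠ 0 := ρ.ne_zero_of_w h5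
      refine ⟨huv, ρ.nval_eq_of_w h5, ?_⟩
      have h6 := σ.N5 f g
      rw [hsf, hsg, add_zero] at h6
      exact σ.norm0 (f * g) huv (h6.trans hσ1.symm.le)

end Aux

end NearWeight

variable {F R : Type*} [Field F] [CommRing R] [Algebra F R]

theorem stmt8
    (hinj : Function.Injective (algebraMap F R))
    (hsur : ¬ Function.Surjective (algebraMap F R))
    (ρ σ : NearWeight F R) (hwa : NearWeight.WellAgreeing ρ σ)
    (Mx Ny : Set ℕ) (hMxfin : Mx.Finite) (hNyfin : Ny.Finite)
    (hMx : (AddSubmonoid.closure Mx : Set ℕ) = NearWeight.Hbarx ρ σ)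
    (hNy : (AddSubmonoid.closure Ny : Set ℕ) = NearWeight.Hbary ρ σ)
    (Gplus : Set (ℕ × ℕ))
    (hGplus : Gplus = NearWeight.GammaTilde ρ σ ∪
      ((fun m => (m, (0 : ℕ))) '' Mx) ∪ ((fun n => ((0 : ℕ), n)) '' Ny))
    (φ : ℕ × ℕ → R)
    (hφ : ∀ a ∈ Gplus, φ a ≠ 0 ∧ (ρ.nval (φ a), σ.nval (φ a)) = a) :
    NearWeight.Hset ρ σ ((Algebra.adjoin F (φ '' Gplus) : Subalgebra F R) : Set R) =
      NearWeight.Hset ρ σ Set.univ := by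
  classical
  have h1 : (1:R) ≠ 0 := fun h => one_ne_zero (hinj (by rw [map_one, map_zero, h]))
  have hρ1 : ρ.w 1 = 0 := ρ.w_one h1
  have hσ1 : σ.w 1 = 0 := σ.w_one h1
  set S : Subalgebra F R := Algebra.adjoin F (φ '' Gplus) with hSdef
  have hφS : ∀ a ∈ Gplus, φ a ∈ S := fun a ha => Algebra.subset_adjoin ⟨a, ha, rfl⟩
  -- every column of H is nonempty
  have hcol : ∀ m : ℕ, {k | ((m, k) : ℕ × ℕ) ∈ NearWeight.Hset ρ σ Set.univ}.Nonempty := by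
    intro m
    rcases Set.eq_empty_or_nonempty {k | ((m, k) : ℕ × ℕ) ∈ NearWeight.Hset ρ σ Set.univ}
      with he | hne
    · exfalso
      have hsub : Set.range (fun k : ℕ => ((m, k) : ℕ × ℕ)) ⊆
          (NearWeight.Hset ρ σ Set.univ)ᶜ := by
        rintro p ⟨k, rfl⟩ hp
        exact Set.eq_empty_iff_forall_notMem.mp he k hp
      have hinf : (Set.range (fun k : ℕ => ((m, k) : ℕ × ℕ))).Infinite :=
        Set.infinite_range_of_injective (fun a b hab => ((Prod.mk.injEq _ _ _ _).mp hab).2)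
      exact (hinf.mono hsub) hwa.1
    · exact hne
  have hrow : ∀ n : ℕ, {m | ((m, n) : ℕ × ℕ) ∈ NearWeight.Hset ρ σ Set.univ}.Nonempty := by
    intro n
    rcases Set.eq_empty_or_nonempty {m | ((m, n) : ℕ × ℕ) ∈ NearWeight.Hset ρ σ Set.univ}
      with he | hne
    · exfalso
      have hsub : Set.range (fun m : ℕ => ((m, n) : ℕ × ℕ)) ⊆
          (NearWeight.Hset ρ σ Set.univ)ᶜ := by
        rintro p ⟨m, rfl⟩ hp
        exact Set.eq_empty_iff_forall_notMem.mp he m hp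
      have hinf : (Set.range (fun m : ℕ => ((m, n) : ℕ × ℕ))).Infinite :=
        Set.infinite_range_of_injective (fun a b hab => ((Prod.mk.injEq _ _ _ _).mp hab).1)
      exact (hinf.mono hsub) hwa.1
    · exact hne
  have hyH_mem : ∀ m : ℕ, ((m, NearWeight.yH ρ σ m) : ℕ × ℕ) ∈ NearWeight.Hset ρ σ Set.univ :=
    fun m => Nat.sInf_mem (hcol m)
  have hxH_mem : ∀ n : ℕ, ((NearWeight.xH ρ σ n, n) : ℕ × ℕ) ∈ NearWeight.Hset ρ σ Set.univ :=
    fun n => Nat.sInf_mem (hrow n)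
  -- realize axis points coming from closure of Mx
  have hMxS : ∀ m ∈ AddSubmonoid.closure Mx,
      ∃ f, f ∈ S ∧ f ≠ 0 ∧ ρ.nval f = m ∧ σ.w f = 0 := by
    intro m hm
    induction hm using AddSubmonoid.closure_induction with
    | mem x hx =>
      have hxG : ((x, 0) : ℕ × ℕ) ∈ Gplus := by
        rw [hGplus]; exact Or.inl (Or.inr ⟨x, hx, rfl⟩)
      obtain ⟨hne, hpair⟩ := hφ _ hxG
      have e1 : ρ.nval (φ (x, 0)) = x := congrArg Prod.fst hpair
      have e2 : σ.nval (φ (x, 0)) = 0 := congrArg Prod.snd hpair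
      refine ⟨φ (x, 0), hφS _ hxG, hne, e1, ?_⟩
      rw [σ.w_eq_nval hne, e2]
      rfl
    | zero =>
      exact ⟨1, S.one_mem, h1, ρ.nval_eq_of_w (k := 0) (by rw [hρ1]; rfl), hσ1⟩
    | add x y hx hy ihx ihy =>
      obtain ⟨f, hfS, hf0, hfρ, hfσ⟩ := ihx
      obtain ⟨g, hgS, hg0, hgρ, hgσ⟩ := ihy
      obtain ⟨hne, hnv, hw0⟩ := NearWeight.prod_realize ρ σ h1 hwa.2 hf0 hg0 hfσ hgσ
      exact ⟨f * g, mul_mem hfS hgS, hne, by rw [hnv, hfρ, hgρ], hw0⟩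
  have hUU' : σ.U ∩ ρ.U = Set.range (algebraMap F R) := by
    rw [Set.inter_comm]; exact hwa.2
  have hNyS : ∀ n ∈ AddSubmonoid.closure Ny,
      ∃ f, f ∈ S ∧ f ≠ 0 ∧ σ.nval f = n ∧ ρ.w f = 0 := by
    intro n hn
    induction hn using AddSubmonoid.closure_induction with
    | mem x hx =>
      have hxG : (((0 : ℕ), x) : ℕ × ℕ) ∈ Gplus := by
        rw [hGplus]; exact Or.inr ⟨x, hx, rfl⟩
      obtain ⟨hne, hpair⟩ := hφ _ hxG
      have e1 : ρ.nval (φ (0, x)) = 0 := congrArg Prod.fst hpair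
      have e2 : σ.nval (φ (0, x)) = x := congrArg Prod.snd hpair
      refine ⟨φ (0, x), hφS _ hxG, hne, e2, ?_⟩
      rw [ρ.w_eq_nval hne, e1]
      rfl
    | zero =>
      exact ⟨1, S.one_mem, h1, σ.nval_eq_of_w (k := 0) (by rw [hσ1]; rfl), hρ1⟩
    | add x y hx hy ihx ihy =>
      obtain ⟨f, hfS, hf0, hfσ, hfρ⟩ := ihx
      obtain ⟨g, hgS, hg0, hgσ, hgρ⟩ := ihy
      obtain ⟨hne, hnv, hw0⟩ := NearWeight.prod_realize σ ρ h1 hUU' hf0 hg0 hfρ hgρ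
      exact ⟨f * g, mul_mem hfS hgS, hne, by rw [hnv, hfσ, hgσ], hw0⟩
  -- realization of (m, yH m) inside S
  have hreal1 : ∀ m : ℕ,
      ((m, NearWeight.yH ρ σ m) : ℕ × ℕ) ∈ NearWeight.Hset ρ σ (S : Set R) := by
    intro m
    by_cases hm : m ∈ NearWeight.Hbarx ρ σ
    · have hy0 : NearWeight.yH ρ σ m = 0 := Nat.le_zero.mp (Nat.sInf_le hm)
      have hm' : m ∈ AddSubmonoid.closure Mx := by
        have := hm
        rw [← hMx] at this
        exact this
      obtain ⟨f, hfS, hf0, hfρ, hfσ⟩ := hMxS m hm'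
      have hσn : σ.nval f = 0 := σ.nval_eq_of_w (k := 0) (by rw [hfσ]; rfl)
      exact ⟨f, hfS, hf0, by rw [hfρ, hσn, hy0]⟩
    · have hG : ((m, NearWeight.yH ρ σ m) : ℕ × ℕ) ∈ Gplus := by
        rw [hGplus]; exact Or.inl (Or.inl ⟨m, hm, rfl⟩)
      obtain ⟨hne, hpair⟩ := hφ _ hG
      exact ⟨φ _, hφS _ hG, hne, hpair⟩
  -- realization of (xH n, n) inside S
  have hreal2 : ∀ n : ℕ,
      ((NearWeight.xH ρ σ n, n) : ℕ × ℕ) ∈ NearWeight.Hset ρ σ (S : Set R) := by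
    intro n
    by_cases hn : n ∈ NearWeight.Hbary ρ σ
    · have hx0 : NearWeight.xH ρ σ n = 0 := Nat.le_zero.mp (Nat.sInf_le hn)
      have hn' : n ∈ AddSubmonoid.closure Ny := by
        have := hn
        rw [← hNy] at this
        exact this
      obtain ⟨f, hfS, hf0, hfσ, hfρ⟩ := hNyS n hn'
      have hρn : ρ.nval f = 0 := ρ.nval_eq_of_w (k := 0) (by rw [hfρ]; rfl)
      exact ⟨f, hfS, hf0, by rw [hρn, hfσ, hx0]⟩
    · set m := NearWeight.xH ρ σ n with hmdef
      have hmnH : ((m, n) : ℕ × ℕ) ∈ NearWeight.Hset ρ σ Set.univ := hxH_mem n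
      have hm0 : m ≠ 0 := by
        intro h0
        apply hn
        show ((0, n) : ℕ × ℕ) ∈ NearWeight.Hset ρ σ Set.univ
        rw [← h0]
        exact hmnH
      have hyn : NearWeight.yH ρ σ m = n := by
        have hle : NearWeight.yH ρ σ m ≤ n := Nat.sInf_le hmnH
        rcases lt_or_eq_of_le hle with hlt | heq
        · exfalso
          have hmkH : ((m, NearWeight.yH ρ σ m) : ℕ × ℕ) ∈ NearWeight.Hset ρ σ Set.univ :=
            hyH_mem m
          set k := NearWeight.yH ρ σ m with hkdef
          obtain ⟨f, -, hf0, hfp⟩ := hmnH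
          obtain ⟨g, -, hg0, hgp⟩ := hmkH
          have ef1 : ρ.nval f = m := congrArg Prod.fst hfp
          have ef2 : σ.nval f = n := congrArg Prod.snd hfp
          have eg1 : ρ.nval g = m := congrArg Prod.fst hgp
          have eg2 : σ.nval g = k := congrArg Prod.snd hgp
          have hwf : ρ.w f = (m : ℕ) := by rw [ρ.w_eq_nval hf0, ef1]
          have hwg : ρ.w g = (m : ℕ) := by rw [ρ.w_eq_nval hg0, eg1]
          have hfM : ρ.w 1 < ρ.w f := by
            rw [hρ1, hwf]
            exact_mod_cast Nat.pos_of_ne_zero hm0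
          have hgM : ρ.w 1 < ρ.w g := by
            rw [hρ1, hwg]
            exact_mod_cast Nat.pos_of_ne_zero hm0
          obtain ⟨c, hc0, hlt'⟩ := ρ.N4 f g hfM hgM (hwf.trans hwg.symm)
          have hσlt : σ.w (c • g) < σ.w f := by
            rw [σ.N1 c g hc0, σ.w_eq_nval hg0, σ.w_eq_nval hf0, eg2, ef2]
            exact_mod_cast hlt
          have hσeq : σ.w (f - c • g) = σ.w f := σ.w_sub_of_lt hσlt
          have hwfc : σ.w (f - c • g) = (n : ℕ) := by
            rw [hσeq, σ.w_eq_nval hf0, ef2]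
          have hnez : f - c • g ≠ 0 := σ.ne_zero_of_w hwfc
          have hρlt : ρ.w (f - c • g) < (m : ℕ) := by rw [← hwf]; exact hlt'
          have hnv : ρ.nval (f - c • g) < m := by
            rw [ρ.w_eq_nval hnez] at hρlt
            exact_mod_cast hρlt
          have hmem2 : ρ.nval (f - c • g) ∈
              {m' | ((m', n) : ℕ × ℕ) ∈ NearWeight.Hset ρ σ Set.univ} :=
            ⟨f - c • g, trivial, hnez, by rw [σ.nval_eq_of_w hwfc]⟩
          exact absurd (Nat.sInf_le hmem2) (not_le.mpr hnv)
        · exact heq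
      have hmG : m ∉ NearWeight.Hbarx ρ σ := by
        intro hmx
        have hy0 : NearWeight.yH ρ σ m ≤ 0 := Nat.sInf_le hmx
        have hn0 : n = 0 := by omega
        apply hn
        rw [hn0]
        exact ⟨1, trivial, h1, by
          rw [ρ.nval_eq_of_w (k := 0) (by rw [hρ1]; rfl),
            σ.nval_eq_of_w (k := 0) (by rw [hσ1]; rfl)]⟩
      have hG : ((m, n) : ℕ × ℕ) ∈ Gplus := by
        rw [hGplus]
        exact Or.inl (Or.inl ⟨m, hmG, by rw [hyn]⟩)
      obtain ⟨hne, hpair⟩ := hφ _ hG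
      exact ⟨φ _, hφS _ hG, hne, hpair⟩
  -- conclusion
  ext p
  constructor
  · rintro ⟨f, -, hf0, hfp⟩
    exact ⟨f, trivial, hf0, hfp⟩
  · rintro ⟨f, -, hf0, rfl⟩
    have hmem : ((ρ.nval f, σ.nval f) : ℕ × ℕ) ∈ NearWeight.Hset ρ σ Set.univ :=
      ⟨f, trivial, hf0, rfl⟩
    have hlub := NearWeight.lub_realize ρ σ S (hreal1 (ρ.nval f)) (hreal2 (σ.nval f))
    have e1 : max (ρ.nval f) (NearWeight.xH ρ σ (σ.nval f)) = ρ.nval f :=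
      max_eq_left (Nat.sInf_le hmem)
    have e2 : max (NearWeight.yH ρ σ (ρ.nval f)) (σ.nval f) = σ.nval f :=
      max_eq_right (Nat.sInf_le hmem)
    have hlub' : ((max (ρ.nval f) (NearWeight.xH ρ σ (σ.nval f)),
        max (NearWeight.yH ρ σ (ρ.nval f)) (σ.nval f)) : ℕ × ℕ) ∈
        NearWeight.Hset ρ σ (S : Set R) := hlub
    rw [e1, e2] at hlub'
    exact hlub'
end

section
/- Let R be a commutative F-algebra admitting two well agreeing near weights ρ and σ. Then R is finitely generated as an F-algebra; more precisely, R = F[{φ_a : a ∈ Γ⁺}] for any choice of elements φ_a ∈ R \ {0} with (ρ(φ_a), σ(φ_a)) = a for each a ∈ Γ⁺. -/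
variable {F R : Type*} [Field F] [CommRing R] [Algebra F R]


section Aux

variable {F R : Type*} [Field F] [CommRing R] [Algebra F R]

lemma weq (τ : NearWeight F R) {f : R} (hf : f ≠ 0) :
    τ.w f = (τ.nval f : WithBot ℕ) := by
  have hb : τ.w f ≠ ⊥ := fun h => hf ((τ.N0 f).mp h)
  unfold NearWeight.nval
  cases h : τ.w f with
  | bot => exact absurd h hb
  | coe k => simp; rfl

lemma wone (τ : NearWeight F R) (h1 : (1:R) ≠ 0) : τ.w 1 = 0 :=
  τ.norm0 1 h1 le_rfl

lemma wzero (τ : NearWeight F R) {f : R} (hf : f ≠ 0) (h : τ.w f ≤ 0) :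
    τ.nval f = 0 := by
  rw [weq τ hf] at h
  have h0 : (0 : WithBot ℕ) ≤ (τ.nval f : WithBot ℕ) := by exact_mod_cast Nat.zero_le _
  have := le_antisymm h h0
  exact_mod_cast this

end Aux

theorem stmt10
    (hinj : Function.Injective (algebraMap F R))
    (hsur : ¬ Function.Surjective (algebraMap F R))
    (ρ σ : NearWeight F R) (hwa : NearWeight.WellAgreeing ρ σ)
    (Mx Ny : Set ℕ) (hMxfin : Mx.Finite) (hNyfin : Ny.Finite)
    (hMx : (AddSubmonoid.closure Mx : Set ℕ) = NearWeight.Hbarx ρ σ)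
    (hNy : (AddSubmonoid.closure Ny : Set ℕ) = NearWeight.Hbary ρ σ)
    (Gplus : Set (ℕ × ℕ))
    (hGplus : Gplus = NearWeight.GammaTilde ρ σ ∪
      ((fun m => (m, (0 : ℕ))) '' Mx) ∪ ((fun n => ((0 : ℕ), n)) '' Ny))
    (φ : ℕ × ℕ → R)
    (hφ : ∀ a ∈ Gplus, φ a ≠ 0 ∧ (ρ.nval (φ a), σ.nval (φ a)) = a) :
    Algebra.adjoin F (φ '' Gplus) = (⊤ : Subalgebra F R) := by
  have h1 : (1:R) ≠ 0 := by
    intro h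
    apply hsur
    intro r
    exact ⟨0, by rw [map_zero, ← mul_one r, h, mul_zero]⟩
  set A := Algebra.adjoin F (φ '' Gplus) with hA
  have hφmem : ∀ a ∈ Gplus, φ a ∈ A := fun a ha => Algebra.subset_adjoin ⟨a, ha, rfl⟩
  have hFA : ∀ f : R, ρ.w f ≤ 0 → σ.w f ≤ 0 → f ∈ A := by
    intro f hρf hσf
    have : f ∈ ρ.U ∩ σ.U := ⟨by rw [NearWeight.U, Set.mem_setOf_eq, wone ρ h1]; exact hρf,
      by rw [NearWeight.U, Set.mem_setOf_eq, wone σ h1]; exact hσf⟩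
    rw [hwa.2] at this
    obtain ⟨c, rfl⟩ := this
    exact A.algebraMap_mem c
  -- product lemma for x-axis
  have prodx : ∀ m ∈ AddSubmonoid.closure Mx,
      ∃ g, g ∈ A ∧ g ≠ 0 ∧ ρ.w g = (m : WithBot ℕ) ∧ σ.w g = 0 := by
    intro m hm
    induction hm using AddSubmonoid.closure_induction with
    | mem x hx =>
      have hxG : ((x, 0) : ℕ × ℕ) ∈ Gplus := by
        rw [hGplus]; exact Or.inl (Or.inr ⟨x, hx, rfl⟩)
      obtain ⟨hne, hpair⟩ := hφ _ hxG
      have h1' : ρ.nval (φ (x,0)) = x := congrArg Prod.fst hpair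
      have h2' : σ.nval (φ (x,0)) = 0 := congrArg Prod.snd hpair
      exact ⟨φ (x,0), hφmem _ hxG, hne, by rw [weq ρ hne, h1'],
        by rw [weq σ hne, h2']; exact Nat.cast_zero⟩
    | zero => exact ⟨1, A.one_mem, h1, by rw [wone ρ h1]; exact Nat.cast_zero.symm, wone σ h1⟩
    | add x y hx hy ihx ihy =>
      obtain ⟨g₁, hA₁, h0₁, hρ₁, hσ₁⟩ := ihx
      obtain ⟨g₂, hA₂, h0₂, hρ₂, hσ₂⟩ := ihy
      by_cases hy0 : y = 0
      · subst hy0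
        have : g₂ ∈ ρ.U ∩ σ.U := ⟨by rw [NearWeight.U, Set.mem_setOf_eq, wone ρ h1, hρ₂]; exact_mod_cast le_rfl,
          by rw [NearWeight.U, Set.mem_setOf_eq, wone σ h1, hσ₂]⟩
        rw [hwa.2] at this
        obtain ⟨c, hc⟩ := this
        have hcne : c ≠ 0 := by rintro rfl; exact h0₂ (by rw [← hc, map_zero])
        have hmul : g₁ * g₂ = c • g₁ := by
          rw [← hc, Algebra.algebraMap_eq_smul_one, mul_smul_comm, mul_one]
        refine ⟨g₁ * g₂, A.mul_mem hA₁ hA₂, ?_, ?_, ?_⟩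
        · rw [hmul]
          intro h
          exact h0₁ ((ρ.N0 g₁).mp (by rw [← ρ.N1 c g₁ hcne, h, (ρ.N0 0).mpr rfl]))
        · rw [hmul, ρ.N1 c g₁ hcne, hρ₁]; norm_num
        · rw [hmul, σ.N1 c g₁ hcne, hσ₁]
      · by_cases hx0 : x = 0
        · subst hx0
          have : g₁ ∈ ρ.U ∩ σ.U := ⟨by rw [NearWeight.U, Set.mem_setOf_eq, wone ρ h1, hρ₁]; exact_mod_cast le_rfl,
            by rw [NearWeight.U, Set.mem_setOf_eq, wone σ h1, hσ₁]⟩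
          rw [hwa.2] at this
          obtain ⟨c, hc⟩ := this
          have hcne : c ≠ 0 := by rintro rfl; exact h0₁ (by rw [← hc, map_zero])
          have hmul : g₁ * g₂ = c • g₂ := by
            rw [← hc, Algebra.algebraMap_eq_smul_one, smul_mul_assoc, one_mul]
          refine ⟨g₁ * g₂, A.mul_mem hA₁ hA₂, ?_, ?_, ?_⟩
          · rw [hmul]
            intro h
            exact h0₂ ((ρ.N0 g₂).mp (by rw [← ρ.N1 c g₂ hcne, h, (ρ.N0 0).mpr rfl]))
          · rw [hmul, ρ.N1 c g₂ hcne, hρ₂]; norm_num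
          · rw [hmul, σ.N1 c g₂ hcne, hσ₂]
        · have hM₁ : ρ.w 1 < ρ.w g₁ := by
            rw [wone ρ h1, hρ₁]; exact_mod_cast Nat.pos_of_ne_zero hx0
          have hM₂ : ρ.w 1 < ρ.w g₂ := by
            rw [wone ρ h1, hρ₂]; exact_mod_cast Nat.pos_of_ne_zero hy0
          have hρm : ρ.w (g₁ * g₂) = ((x + y : ℕ) : WithBot ℕ) := by
            rw [ρ.N5' g₁ g₂ hM₁ hM₂, hρ₁, hρ₂]; exact_mod_cast rfl
          have hne : g₁ * g₂ ≠ 0 := by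
            intro h
            rw [(ρ.N0 (g₁*g₂)).mpr h] at hρm
            exact (WithBot.bot_ne_coe) hρm
          have hσm : σ.w (g₁ * g₂) ≤ 0 := by
            calc σ.w (g₁ * g₂) ≤ σ.w g₁ + σ.w g₂ := σ.N5 g₁ g₂
            _ = 0 := by rw [hσ₁, hσ₂]; norm_num
          refine ⟨g₁ * g₂, A.mul_mem hA₁ hA₂, hne, hρm, ?_⟩
          have := wzero σ hne hσm
          rw [weq σ hne, this]; exact Nat.cast_zero
  -- product lemma for y-axis
  have prody : ∀ n ∈ AddSubmonoid.closure Ny,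
      ∃ g, g ∈ A ∧ g ≠ 0 ∧ σ.w g = (n : WithBot ℕ) ∧ ρ.w g = 0 := by
    intro n hn
    induction hn using AddSubmonoid.closure_induction with
    | mem x hx =>
      have hxG : (((0:ℕ), x) : ℕ × ℕ) ∈ Gplus := by
        rw [hGplus]; exact Or.inr ⟨x, hx, rfl⟩
      obtain ⟨hne, hpair⟩ := hφ _ hxG
      have h1' : ρ.nval (φ (0,x)) = 0 := congrArg Prod.fst hpair
      have h2' : σ.nval (φ (0,x)) = x := congrArg Prod.snd hpair
      exact ⟨φ (0,x), hφmem _ hxG, hne, by rw [weq σ hne, h2'],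
        by rw [weq ρ hne, h1']; exact Nat.cast_zero⟩
    | zero => exact ⟨1, A.one_mem, h1, by rw [wone σ h1]; exact Nat.cast_zero.symm, wone ρ h1⟩
    | add x y hx hy ihx ihy =>
      obtain ⟨g₁, hA₁, h0₁, hσ₁, hρ₁⟩ := ihx
      obtain ⟨g₂, hA₂, h0₂, hσ₂, hρ₂⟩ := ihy
      by_cases hy0 : y = 0
      · subst hy0
        have : g₂ ∈ ρ.U ∩ σ.U := ⟨by rw [NearWeight.U, Set.mem_setOf_eq, wone ρ h1, hρ₂],
          by rw [NearWeight.U, Set.mem_setOf_eq, wone σ h1, hσ₂]; exact_mod_cast le_rfl⟩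
        rw [hwa.2] at this
        obtain ⟨c, hc⟩ := this
        have hcne : c ≠ 0 := by rintro rfl; exact h0₂ (by rw [← hc, map_zero])
        have hmul : g₁ * g₂ = c • g₁ := by
          rw [← hc, Algebra.algebraMap_eq_smul_one, mul_smul_comm, mul_one]
        refine ⟨g₁ * g₂, A.mul_mem hA₁ hA₂, ?_, ?_, ?_⟩
        · rw [hmul]
          intro h
          exact h0₁ ((σ.N0 g₁).mp (by rw [← σ.N1 c g₁ hcne, h, (σ.N0 0).mpr rfl]))
        · rw [hmul, σ.N1 c g₁ hcne, hσ₁]; norm_num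
        · rw [hmul, ρ.N1 c g₁ hcne, hρ₁]
      · by_cases hx0 : x = 0
        · subst hx0
          have : g₁ ∈ ρ.U ∩ σ.U := ⟨by rw [NearWeight.U, Set.mem_setOf_eq, wone ρ h1, hρ₁],
            by rw [NearWeight.U, Set.mem_setOf_eq, wone σ h1, hσ₁]; exact_mod_cast le_rfl⟩
          rw [hwa.2] at this
          obtain ⟨c, hc⟩ := this
          have hcne : c ≠ 0 := by rintro rfl; exact h0₁ (by rw [← hc, map_zero])
          have hmul : g₁ * g₂ = c • g₂ := by
            rw [← hc, Algebra.algebraMap_eq_smul_one, smul_mul_assoc, one_mul]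
          refine ⟨g₁ * g₂, A.mul_mem hA₁ hA₂, ?_, ?_, ?_⟩
          · rw [hmul]
            intro h
            exact h0₂ ((σ.N0 g₂).mp (by rw [← σ.N1 c g₂ hcne, h, (σ.N0 0).mpr rfl]))
          · rw [hmul, σ.N1 c g₂ hcne, hσ₂]; norm_num
          · rw [hmul, ρ.N1 c g₂ hcne, hρ₂]
        · have hM₁ : σ.w 1 < σ.w g₁ := by
            rw [wone σ h1, hσ₁]; exact_mod_cast Nat.pos_of_ne_zero hx0
          have hM₂ : σ.w 1 < σ.w g₂ := by
            rw [wone σ h1, hσ₂]; exact_mod_cast Nat.pos_of_ne_zero hy0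
          have hσm : σ.w (g₁ * g₂) = ((x + y : ℕ) : WithBot ℕ) := by
            rw [σ.N5' g₁ g₂ hM₁ hM₂, hσ₁, hσ₂]; exact_mod_cast rfl
          have hne : g₁ * g₂ ≠ 0 := by
            intro h
            rw [(σ.N0 (g₁*g₂)).mpr h] at hσm
            exact (WithBot.bot_ne_coe) hσm
          have hρm : ρ.w (g₁ * g₂) ≤ 0 := by
            calc ρ.w (g₁ * g₂) ≤ ρ.w g₁ + ρ.w g₂ := ρ.N5 g₁ g₂
            _ = 0 := by rw [hρ₁, hρ₂]; norm_num
          refine ⟨g₁ * g₂, A.mul_mem hA₁ hA₂, hne, hσm, ?_⟩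
          have := wzero ρ hne hρm
          rw [weq ρ hne, this]; exact Nat.cast_zero
  -- main induction
  have key : ∀ N : ℕ, ∀ f : R, f ≠ 0 → ρ.nval f + σ.nval f ≤ N → f ∈ A := by
    intro N
    induction N with
    | zero =>
      intro f hf hN
      have hm : ρ.nval f = 0 := by omega
      have hn : σ.nval f = 0 := by omega
      exact hFA f (by rw [weq ρ hf, hm]; exact Nat.cast_zero.le)
        (by rw [weq σ hf, hn]; exact Nat.cast_zero.le)
    | succ N ih =>
      intro f hf hN
      by_cases hm : ρ.nval f = 0
      · by_cases hn : σ.nval f = 0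
        · exact hFA f (by rw [weq ρ hf, hm]; exact Nat.cast_zero.le)
            (by rw [weq σ hf, hn]; exact Nat.cast_zero.le)
        · -- σ side
          have hbar : σ.nval f ∈ NearWeight.Hbary ρ σ :=
            ⟨f, Set.mem_univ f, hf, by rw [hm]⟩
          have hmem : σ.nval f ∈ (AddSubmonoid.closure Ny : Set ℕ) := by rw [hNy]; exact hbar
          obtain ⟨g, hgA, hg0, hgσ, hgρ⟩ := prody _ hmem
          have hMf : σ.w 1 < σ.w f := by
            rw [wone σ h1, weq σ hf]; exact_mod_cast Nat.pos_of_ne_zero hn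
          have hMg : σ.w 1 < σ.w g := by
            rw [wone σ h1, hgσ]; exact_mod_cast Nat.pos_of_ne_zero hn
          obtain ⟨c, hc, hlt⟩ := σ.N4 f g hMf hMg (by rw [weq σ hf, hgσ])
          by_cases hf' : f - c • g = 0
          · rw [show f = c • g from sub_eq_zero.mp hf']
            exact A.smul_mem hgA c
          · have hσ' : σ.nval (f - c • g) < σ.nval f := by
              rw [weq σ hf', weq σ hf] at hlt; exact_mod_cast hlt
            have hρ' : ρ.nval (f - c • g) = 0 := by
              apply wzero ρ hf'
              have h2 : ρ.w (f - c • g) ≤ max (ρ.w f) (ρ.w ((-c) • g)) := by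
                rw [sub_eq_add_neg, ← neg_smul] at *
                exact ρ.N2 f _
              rw [ρ.N1 (-c) g (neg_ne_zero.mpr hc), hgρ, weq ρ hf, hm] at h2
              calc ρ.w (f - c • g) ≤ max ((0:ℕ) : WithBot ℕ) 0 := h2
              _ = 0 := by norm_num
            have hsum : ρ.nval (f - c • g) + σ.nval (f - c • g) ≤ N := by omega
            have : f = (f - c • g) + c • g := by ring
            rw [this]
            exact A.add_mem (ih _ hf' hsum) (A.smul_mem hgA c)
      · -- ρ side
        obtain ⟨g, hgA, hg0, hgρ, hgσ⟩ :
            ∃ g, g ∈ A ∧ g ≠ 0 ∧ ρ.w g = (ρ.nval f : WithBot ℕ) ∧ σ.nval g ≤ σ.nval f := by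
          by_cases hb : ρ.nval f ∈ NearWeight.Hbarx ρ σ
          · have hmem : ρ.nval f ∈ (AddSubmonoid.closure Mx : Set ℕ) := by rw [hMx]; exact hb
            obtain ⟨g, hgA, hg0, hgρ, hgσ⟩ := prodx _ hmem
            exact ⟨g, hgA, hg0, hgρ, by rw [wzero σ hg0 hgσ.le]; exact Nat.zero_le _⟩
          · have haG : ((ρ.nval f, NearWeight.yH ρ σ (ρ.nval f)) : ℕ × ℕ) ∈ Gplus := by
              rw [hGplus]; exact Or.inl (Or.inl ⟨ρ.nval f, hb, rfl⟩)
            obtain ⟨hne, hpair⟩ := hφ _ haG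
            have h1' : ρ.nval (φ _) = ρ.nval f := congrArg Prod.fst hpair
            have h2' : σ.nval (φ _) = NearWeight.yH ρ σ (ρ.nval f) := congrArg Prod.snd hpair
            refine ⟨_, hφmem _ haG, hne, by rw [weq ρ hne, h1'], ?_⟩
            rw [h2']
            exact Nat.sInf_le ⟨f, Set.mem_univ f, hf, rfl⟩
        have hMf : ρ.w 1 < ρ.w f := by
          rw [wone ρ h1, weq ρ hf]; exact_mod_cast Nat.pos_of_ne_zero hm
        have hMg : ρ.w 1 < ρ.w g := by
          rw [wone ρ h1, hgρ]; exact_mod_cast Nat.pos_of_ne_zero hm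
        obtain ⟨c, hc, hlt⟩ := ρ.N4 f g hMf hMg (by rw [weq ρ hf, hgρ])
        by_cases hf' : f - c • g = 0
        · rw [show f = c • g from sub_eq_zero.mp hf']
          exact A.smul_mem hgA c
        · have hρ' : ρ.nval (f - c • g) < ρ.nval f := by
            rw [weq ρ hf', weq ρ hf] at hlt; exact_mod_cast hlt
          have hσ' : σ.nval (f - c • g) ≤ σ.nval f := by
            have h2 : σ.w (f - c • g) ≤ max (σ.w f) (σ.w ((-c) • g)) := by
              rw [sub_eq_add_neg, ← neg_smul] at *
              exact σ.N2 f _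
            rw [σ.N1 (-c) g (neg_ne_zero.mpr hc), weq σ hf, weq σ hg0] at h2
            have h3 : σ.w (f - c • g) ≤ (σ.nval f : WithBot ℕ) :=
              le_trans h2 (max_le le_rfl (by exact_mod_cast hgσ))
            rw [weq σ hf'] at h3
            exact_mod_cast h3
          have hsum : ρ.nval (f - c • g) + σ.nval (f - c • g) ≤ N := by omega
          have : f = (f - c • g) + c • g := by ring
          rw [this]
          exact A.add_mem (ih _ hf' hsum) (A.smul_mem hgA c)
  rw [eq_top_iff]
  intro f _
  by_cases hf : f = 0
  · rw [hf]; exact A.zero_mem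
  · exact key _ f hf le_rfl
end

section
/- Let ρ and σ be two well agreeing near weights on R and let I be a nonzero proper ideal of R. Then, as an F-vector space, R/I is finite dimensional and dim_F(R/I) ≤ #{a ∈ Γ : a ∉ H(I)}. -/
variable {F R : Type*} [Field F] [CommRing R] [Algebra F R]

section NW13
open NearWeight

variable {F R : Type*} [Field F] [CommRing R] [Algebra F R]

namespace NW13

lemma w_one [Nontrivial R] (ρ : NearWeight F R) : ρ.w 1 = 0 :=
  ρ.norm0 1 one_ne_zero le_rfl

lemma w_eq_nval (ρ : NearWeight F R) {f : R} (hf : f ≠ 0) :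
    ρ.w f = (ρ.nval f : WithBot ℕ) := by
  have h : ρ.w f ≠ ⊥ := fun h => hf ((ρ.N0 f).1 h)
  lift ρ.w f to ℕ using h with n hn
  rw [NearWeight.nval, ← hn, WithBot.unbotD_coe]
  rfl

lemma w_neg (ρ : NearWeight F R) (f : R) : ρ.w (-f) = ρ.w f := by
  have := ρ.N1 (-1 : F) f (by norm_num)
  simpa [neg_one_smul] using this

lemma w_sub_le (ρ : NearWeight F R) (f g : R) :
    ρ.w (f - g) ≤ max (ρ.w f) (ρ.w g) := by
  have := ρ.N2 f (-g)
  simpa [sub_eq_add_neg, w_neg] using this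

lemma w_add_eq (ρ : NearWeight F R) {f g : R} (h : ρ.w f < ρ.w g) :
    ρ.w (f + g) = ρ.w g := by
  refine le_antisymm (le_trans (ρ.N2 f g) (by simp [le_of_lt h])) ?_
  by_contra hc
  push_neg at hc
  have h2 : ρ.w g ≤ max (ρ.w (f + g)) (ρ.w f) := by
    have := w_sub_le ρ (f + g) f
    simpa using this
  rcases max_cases (ρ.w (f + g)) (ρ.w f) with ⟨he, _⟩ | ⟨he, _⟩ <;> rw [he] at h2
  · exact absurd (lt_of_le_of_lt h2 hc) (lt_irrefl _)
  · exact absurd (lt_of_le_of_lt h2 h) (lt_irrefl _)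

/-- product with an element of `M` is nonzero -/
lemma mul_M_ne_zero (ρ : NearWeight F R) {f g : R} (hf : f ≠ 0)
    (hg : ρ.w 1 < ρ.w g) : f * g ≠ 0 := by
  have h0 : ρ.w 0 < ρ.w f := by
    rw [(ρ.N0 0).2 rfl]
    exact Ne.bot_lt (fun h => hf ((ρ.N0 f).1 h))
  have := ρ.N3' 0 f g h0 hg
  rw [zero_mul, (ρ.N0 0).2 rfl] at this
  exact fun h => by rw [h, (ρ.N0 0).2 rfl] at this; exact lt_irrefl _ this

lemma nval_pos_iff [Nontrivial R] (ρ : NearWeight F R) {f : R} (hf : f ≠ 0) :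
    ρ.w 1 < ρ.w f ↔ 0 < ρ.nval f := by
  rw [w_one, w_eq_nval ρ hf]
  constructor <;> intro h <;> exact_mod_cast h

lemma nval_zero_of_not_M [Nontrivial R] (ρ : NearWeight F R) {f : R} (hf : f ≠ 0)
    (h : ¬ ρ.w 1 < ρ.w f) : ρ.nval f = 0 := by
  have := ρ.norm0 f hf (le_of_not_gt h)
  have h2 := w_eq_nval ρ hf
  rw [this] at h2
  exact_mod_cast h2.symm

lemma nval_mul_M [Nontrivial R] (ρ : NearWeight F R) {f g : R}
    (hf : ρ.w 1 < ρ.w f) (hg : ρ.w 1 < ρ.w g) :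
    ρ.w 1 < ρ.w (f * g) ∧ ρ.nval (f * g) = ρ.nval f + ρ.nval g := by
  have hf0 : f ≠ 0 := by rintro rfl; rw [(ρ.N0 0).2 rfl] at hf; exact absurd hf (by simp)
  have hg0 : g ≠ 0 := by rintro rfl; rw [(ρ.N0 0).2 rfl] at hg; exact absurd hg (by simp)
  have hfg0 : f * g ≠ 0 := mul_M_ne_zero ρ hf0 hg
  have h5 := ρ.N5' f g hf hg
  rw [w_eq_nval ρ hf0, w_eq_nval ρ hg0, w_eq_nval ρ hfg0] at h5
  have hval : ρ.nval (f * g) = ρ.nval f + ρ.nval g := by exact_mod_cast h5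
  constructor
  · rw [w_one, w_eq_nval ρ hfg0, hval]
    have h1 : 0 < ρ.nval f := (nval_pos_iff ρ hf0).1 hf
    exact_mod_cast Nat.lt_of_lt_of_le h1 (Nat.le_add_right _ _)
  · exact hval

lemma nval_mul_le [Nontrivial R] (ρ : NearWeight F R) {f g : R}
    (hf : f ≠ 0) (hg : g ≠ 0) (hfg : f * g ≠ 0) :
    ρ.nval (f * g) ≤ ρ.nval f + ρ.nval g := by
  have h5 := ρ.N5 f g
  rw [w_eq_nval ρ hf, w_eq_nval ρ hg, w_eq_nval ρ hfg] at h5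
  exact_mod_cast h5

lemma exists_M (ρ : NearWeight F R) : ∃ g, ρ.w 1 < ρ.w g := by
  by_contra h
  push_neg at h
  have := ρ.normgcd 0 (fun f hf => absurd hf (not_lt_of_ge (h f)))
  exact absurd this (by norm_num)

lemma nval_smul (ρ : NearWeight F R) {c : F} (hc : c ≠ 0) (f : R) :
    ρ.nval (c • f) = ρ.nval f := by
  unfold NearWeight.nval
  rw [ρ.N1 c f hc]

lemma pow_M [Nontrivial R] (ρ : NearWeight F R) {g : R} (hg : ρ.w 1 < ρ.w g) (k : ℕ) :
    ρ.w 1 < ρ.w (g ^ (k + 1)) ∧ ρ.nval (g ^ (k + 1)) = (k + 1) * ρ.nval g := by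
  induction k with
  | zero => rw [zero_add, pow_one, one_mul]; exact ⟨hg, rfl⟩
  | succ n ih =>
    have h := nval_mul_M ρ ih.1 hg
    rw [← pow_succ] at h
    exact ⟨h.1, by rw [h.2, ih.2]; ring⟩

lemma exists_M_ge [Nontrivial R] (ρ : NearWeight F R) (n : ℕ) :
    ∃ g, ρ.w 1 < ρ.w g ∧ n < ρ.nval g := by
  obtain ⟨g, hg⟩ := exists_M ρ
  have hg0 : g ≠ 0 := by rintro rfl; rw [(ρ.N0 0).2 rfl] at hg; exact absurd hg (by simp)
  have h1 : 1 ≤ ρ.nval g := (nval_pos_iff ρ hg0).1 hg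
  refine ⟨g ^ (n + 1), (pow_M ρ hg n).1, ?_⟩
  rw [(pow_M ρ hg n).2]
  calc n < n + 1 := Nat.lt_succ_self n
  _ = (n+1) * 1 := by ring
  _ ≤ (n + 1) * ρ.nval g := Nat.mul_le_mul_left _ h1

end NW13
end NW13
section C2
open NearWeight
variable {F R : Type*} [Field F] [CommRing R] [Algebra F R]
namespace NW13

lemma ne_zero_of_M (ρ : NearWeight F R) {g : R} (hg : ρ.w 1 < ρ.w g) : g ≠ 0 := by
  rintro rfl; rw [(ρ.N0 0).2 rfl] at hg; exact absurd hg (by simp)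

lemma mem_F1 {f : R} (h : f ∈ Set.range (algebraMap F R)) (hf : f ≠ 0) :
    ∃ c : F, c ≠ 0 ∧ f = algebraMap F R c := by
  obtain ⟨c, rfl⟩ := h
  exact ⟨c, fun h0 => hf (by rw [h0, map_zero]), rfl⟩

lemma mul_ne_zero' (ρ σ : NearWeight F R) (hwa : WellAgreeing ρ σ)
    {f g : R} (hf : f ≠ 0) (hg : g ≠ 0) : f * g ≠ 0 := by
  by_cases h1 : ρ.w 1 < ρ.w f
  · rw [mul_comm]; exact mul_M_ne_zero ρ hg h1
  by_cases h2 : σ.w 1 < σ.w f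
  · rw [mul_comm]; exact mul_M_ne_zero σ hg h2
  have hmem : f ∈ Set.range (algebraMap F R) := by
    rw [← hwa.2]; exact ⟨le_of_not_gt h1, le_of_not_gt h2⟩
  obtain ⟨c, hc, rfl⟩ := mem_F1 hmem hf
  rw [← Algebra.smul_def]
  intro h0
  apply hg
  calc g = c⁻¹ • (c • g) := by rw [smul_smul, inv_mul_cancel₀ hc, one_smul]
  _ = 0 := by rw [h0, smul_zero]

/-- eventual additivity of a near weight against large `M`-elements -/
def HasT (ρ : NearWeight F R) (x : R) (e : ℤ) : Prop :=
  ∃ N : ℕ, ∀ g : R, ρ.w 1 < ρ.w g → N < ρ.nval g →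
    ρ.w 1 < ρ.w (x * g) ∧ (ρ.nval (x * g) : ℤ) = ρ.nval g + e

lemma T_unique [Nontrivial R] (ρ : NearWeight F R) {x : R} {e e' : ℤ}
    (h : HasT ρ x e) (h' : HasT ρ x e') : e = e' := by
  obtain ⟨N, hN⟩ := h; obtain ⟨N', hN'⟩ := h'
  obtain ⟨g, hgM, hgval⟩ := exists_M_ge ρ (max N N')
  have a := (hN g hgM (lt_of_le_of_lt (le_max_left _ _) hgval)).2
  have b := (hN' g hgM (lt_of_le_of_lt (le_max_right _ _) hgval)).2
  omega

lemma T_M [Nontrivial R] (ρ : NearWeight F R) {x : R} (hx : ρ.w 1 < ρ.w x) :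
    HasT ρ x (ρ.nval x) := by
  refine ⟨0, fun g hg _ => ?_⟩
  obtain ⟨hM, hval⟩ := nval_mul_M ρ hx hg
  exact ⟨hM, by rw [hval]; push_cast; ring⟩

lemma T_F1 (ρ : NearWeight F R) {c : F} (hc : c ≠ 0) :
    HasT ρ (algebraMap F R c) 0 := by
  refine ⟨0, fun g hg _ => ?_⟩
  have h : algebraMap F R c * g = c • g := (Algebra.smul_def c g).symm
  constructor
  · rw [h, ρ.N1 c g hc]; exact hg
  · rw [h, nval_smul ρ hc]; push_cast; ring

lemma T_one (ρ : NearWeight F R) : HasT ρ (1 : R) 0 := by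
  have := T_F1 ρ (one_ne_zero : (1:F) ≠ 0)
  rwa [map_one] at this

lemma T_le [Nontrivial R] (ρ : NearWeight F R) {x : R} {e : ℤ}
    (hx : x ≠ 0) (h : HasT ρ x e) : e ≤ (ρ.nval x : ℤ) := by
  obtain ⟨N, hN⟩ := h
  obtain ⟨g, hgM, hgval⟩ := exists_M_ge ρ N
  obtain ⟨hM, hval⟩ := hN g hgM hgval
  have hg0 : g ≠ 0 := ne_zero_of_M ρ hgM
  have hle := nval_mul_le ρ hx hg0 (ne_zero_of_M ρ hM)
  omega

lemma T_add [Nontrivial R] (ρ : NearWeight F R) {x y : R} {e e' : ℤ}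
    (h : HasT ρ x e) (h' : HasT ρ y e') : HasT ρ (x * y) (e + e') := by
  obtain ⟨N, hN⟩ := h; obtain ⟨N', hN'⟩ := h'
  refine ⟨max N' (N + (-e').toNat), fun g hg hval => ?_⟩
  have h1 := hN' g hg (lt_of_le_of_lt (le_max_left _ _) hval)
  have h2 : (N : ℤ) < ρ.nval (y * g) := by
    have : (N + (-e').toNat : ℕ) < ρ.nval g := lt_of_le_of_lt (le_max_right _ _) hval
    have h3 : (-e' : ℤ) ≤ (-e').toNat := Int.self_le_toNat _
    omega
  have h4 := hN (y * g) h1.1 (by exact_mod_cast h2)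
  rw [mul_assoc]
  exact ⟨h4.1, by rw [h4.2, h1.2]; ring⟩

lemma T_pow [Nontrivial R] (ρ : NearWeight F R) {x : R} {e : ℤ}
    (h : HasT ρ x e) (k : ℕ) : HasT ρ (x ^ k) (k * e) := by
  induction k with
  | zero => simpa using T_one ρ
  | succ n ih =>
    have := T_add ρ ih h
    rw [← pow_succ] at this
    convert this using 1
    push_cast; ring

lemma T_pos_val [Nontrivial R] (ρ : NearWeight F R) {x : R} {e : ℤ}
    (hx : x ≠ 0) (h : HasT ρ x e) (he : 1 ≤ e) :
    ρ.w 1 < ρ.w x ∧ (ρ.nval x : ℤ) = e := by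
  by_cases hM : ρ.w 1 < ρ.w x
  · exact ⟨hM, by rw [T_unique ρ (T_M ρ hM) h]⟩
  · exfalso
    have h0 : ρ.nval x = 0 := nval_zero_of_not_M ρ hx hM
    have := T_le ρ hx h
    omega

lemma T_nonpos_val [Nontrivial R] (ρ : NearWeight F R) {x : R} {e : ℤ}
    (hx : x ≠ 0) (h : HasT ρ x e) (he : e ≤ 0) : ρ.nval x = 0 := by
  by_cases hM : ρ.w 1 < ρ.w x
  · exfalso
    have h1 := T_unique ρ (T_M ρ hM) h
    have h2 := (nval_pos_iff ρ hx).1 hM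
    omega
  · exact nval_zero_of_not_M ρ hx hM

/-- the fundamental construction of `HasT` from one good element -/
lemma T_of_exists_M [Nontrivial R] (ρ : NearWeight F R) {x g₀ : R} (hx : x ≠ 0)
    (hg₀ : ρ.w 1 < ρ.w g₀) (hxg₀ : ρ.w 1 < ρ.w (x * g₀)) :
    HasT ρ x ((ρ.nval (x * g₀) : ℤ) - ρ.nval g₀) := by
  refine ⟨ρ.nval g₀, fun g hg hval => ?_⟩
  have hg0 : g ≠ 0 := ne_zero_of_M ρ hg
  have hgg₀ : ρ.w 1 < ρ.w (g * g₀) ∧ ρ.nval (g * g₀) = ρ.nval g + ρ.nval g₀ :=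
    nval_mul_M ρ hg hg₀
  have hxgM : ρ.w 1 < ρ.w (x * g) := by
    by_contra hc
    have hxg0 : x * g ≠ 0 := mul_M_ne_zero ρ hx hg
    have hz : ρ.nval (x * g) = 0 := nval_zero_of_not_M ρ hxg0 hc
    -- compute x * (g * g₀) two ways
    have e1 : ρ.nval (x * g₀ * g) = ρ.nval (x * g₀) + ρ.nval g := (nval_mul_M ρ hxg₀ hg).2
    have e2 : ρ.nval (x * g * g₀) ≤ ρ.nval (x * g) + ρ.nval g₀ :=
      nval_mul_le ρ hxg0 (ne_zero_of_M ρ hg₀) (mul_M_ne_zero ρ hxg0 hg₀)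
    have e3 : x * g₀ * g = x * g * g₀ := by ring
    rw [e3] at e1
    have h1 : 1 ≤ ρ.nval (x * g₀) := (nval_pos_iff ρ (ne_zero_of_M ρ hxg₀)).1 hxg₀
    omega
  refine ⟨hxgM, ?_⟩
  have e1 : ρ.nval (x * g₀ * g) = ρ.nval (x * g₀) + ρ.nval g := (nval_mul_M ρ hxg₀ hg).2
  have e2 : ρ.nval (x * g * g₀) = ρ.nval (x * g) + ρ.nval g₀ := (nval_mul_M ρ hxgM hg₀).2
  have e3 : x * g₀ * g = x * g * g₀ := by ring
  rw [e3] at e1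
  omega

end NW13
end C2
section C3
open NearWeight
variable {F R : Type*} [Field F] [CommRing R] [Algebra F R]
namespace NW13

lemma nval_one [Nontrivial R] (ρ : NearWeight F R) : ρ.nval (1 : R) = 0 := by
  have h := w_one (F := F) ρ
  have h2 := w_eq_nval ρ (one_ne_zero : (1:R) ≠ 0)
  rw [h] at h2
  exact_mod_cast h2.symm

lemma nval_algebraMap [Nontrivial R] (ρ : NearWeight F R) {c : F} (hc : c ≠ 0) :
    ρ.nval (algebraMap F R c) = 0 := by
  rw [Algebra.algebraMap_eq_smul_one, nval_smul ρ hc, nval_one]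

/-- there exists an element with negative tilde-weight -/
lemma exists_negT [Nontrivial R] (τ : NearWeight F R)
    (hdom : ∀ {f g : R}, f ≠ 0 → g ≠ 0 → f * g ≠ 0)
    (hTex : ∀ x : R, x ≠ 0 → ∃ e, HasT τ x e)
    (u : R) (hu0 : u ≠ 0) (huv : τ.nval u = 0)
    (huF : u ∉ Set.range (algebraMap F R)) :
    ∃ r e, r ≠ 0 ∧ HasT τ r e ∧ e < 0 := by
  by_contra hno
  push_neg at hno
  have hno' : ∀ r (e : ℤ), r ≠ 0 → HasT τ r e → 0 ≤ e := by
    intro r e hr hT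
    exact hno r e hr hT
  obtain ⟨eu, heu⟩ := hTex u hu0
  have heu0 : eu = 0 := le_antisymm (by have := T_le τ hu0 heu; omega) (hno' u eu hu0 heu)
  subst heu0
  obtain ⟨N, hN⟩ := heu
  obtain ⟨g, hgM, hgval⟩ := exists_M_ge τ N
  have hg0 : g ≠ 0 := ne_zero_of_M τ hgM
  obtain ⟨hugM, hugval⟩ := hN g hgM hgval
  have hug0 : u * g ≠ 0 := ne_zero_of_M τ hugM
  have hweq : τ.w (u * g) = τ.w g := by
    rw [w_eq_nval τ hug0, w_eq_nval τ hg0]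
    exact_mod_cast (by omega : (τ.nval (u*g) : ℤ) = τ.nval g)
  obtain ⟨c, hc, hN4⟩ := τ.N4 (u * g) g hugM hgM hweq
  set v := u - c • (1 : R) with hv
  have hv0 : v ≠ 0 := by
    intro h
    apply huF
    have : u = c • (1 : R) := by rwa [sub_eq_zero] at h
    exact ⟨c, by rw [Algebra.algebraMap_eq_smul_one, ← this]⟩
  have veq : v * g = u * g - c • g := by
    simp only [hv, Algebra.smul_def]
    ring
  have hvg0 : v * g ≠ 0 := hdom hv0 hg0
  have hlt : τ.nval (v * g) < τ.nval g := by
    rw [← veq] at hN4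
    rw [w_eq_nval τ hvg0, hweq, w_eq_nval τ hg0] at hN4
    exact_mod_cast hN4
  obtain ⟨ev, hevT⟩ := hTex v hv0
  have hev0 : 0 ≤ ev := hno' v ev hv0 hevT
  obtain ⟨Nv, hNv⟩ := hevT
  obtain ⟨h, hhM, hhval⟩ := exists_M_ge τ Nv
  have hh0 : h ≠ 0 := ne_zero_of_M τ hhM
  obtain ⟨hghM, hghval⟩ := nval_mul_M τ hgM hhM
  have hA := hNv (g * h) hghM (by omega)
  have massoc : v * (g * h) = v * g * h := by ring
  rw [massoc] at hA
  have hg1 : 1 ≤ τ.nval g := (nval_pos_iff τ hg0).1 hgM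
  by_cases hvgM : τ.w 1 < τ.w (v * g)
  · have e2 := (nval_mul_M τ hvgM hhM).2
    omega
  · have hz : τ.nval (v * g) = 0 := nval_zero_of_not_M τ hvg0 hvgM
    have e2 := nval_mul_le τ hvg0 hh0 (mul_M_ne_zero τ hvg0 hhM)
    omega

/-- rows of H(R) are eventually realized -/
lemma exists_row (ρ σ : NearWeight F R) (hwa : WellAgreeing ρ σ) :
    ∃ M₂ : ℕ, 1 ≤ M₂ ∧ ∀ m, M₂ ≤ m → ∃ u : R, u ≠ 0 ∧ ρ.nval u = m ∧ σ.nval u = 0 := by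
  have hBad : {m : ℕ | (m, 0) ∉ Hset ρ σ Set.univ}.Finite := by
    apply Set.Finite.subset (hwa.1.image Prod.fst)
    intro m hm
    exact ⟨(m, 0), hm, rfl⟩
  obtain ⟨B, hB⟩ := hBad.bddAbove
  refine ⟨B + 1, by omega, fun m hm => ?_⟩
  have hmem : (m, 0) ∈ Hset ρ σ Set.univ := by
    by_contra hcon
    have := hB hcon
    omega
  obtain ⟨f, _, hf0, hfp⟩ := hmem
  exact ⟨f, hf0, congrArg Prod.fst hfp, congrArg Prod.snd hfp⟩

lemma exists_col (ρ σ : NearWeight F R) (hwa : WellAgreeing ρ σ) :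
    ∃ M₂ : ℕ, 1 ≤ M₂ ∧ ∀ m, M₂ ≤ m → ∃ u : R, u ≠ 0 ∧ σ.nval u = m ∧ ρ.nval u = 0 := by
  have hBad : {m : ℕ | (0, m) ∉ Hset ρ σ Set.univ}.Finite := by
    apply Set.Finite.subset (hwa.1.image Prod.snd)
    intro m hm
    exact ⟨(0, m), hm, rfl⟩
  obtain ⟨B, hB⟩ := hBad.bddAbove
  refine ⟨B + 1, by omega, fun m hm => ?_⟩
  have hmem : (0, m) ∈ Hset ρ σ Set.univ := by
    by_contra hcon
    have := hB hcon
    omega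
  obtain ⟨f, _, hf0, hfp⟩ := hmem
  exact ⟨f, hf0, congrArg Prod.snd hfp, congrArg Prod.fst hfp⟩

/-- every nonzero element has a (ρ-)tilde weight -/
lemma T_exists [Nontrivial R] (ρ σ : NearWeight F R) (hwa : WellAgreeing ρ σ)
    (x : R) (hx : x ≠ 0) : ∃ e, HasT ρ x e := by
  by_cases hα : ∃ g₀, ρ.w 1 < ρ.w g₀ ∧ ρ.w 1 < ρ.w (x * g₀)
  · obtain ⟨g₀, h1, h2⟩ := hα
    exact ⟨_, T_of_exists_M ρ hx h1 h2⟩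
  push_neg at hα
  exfalso
  have hdom : ∀ {f g : R}, f ≠ 0 → g ≠ 0 → f * g ≠ 0 :=
    fun hf hg => mul_ne_zero' ρ σ hwa hf hg
  have βR : ∀ r : R, r ≠ 0 → ρ.w (x * r) ≤ ρ.w 1 := by
    intro r hr
    obtain ⟨g, hgM, hgval⟩ := exists_M_ge ρ (ρ.nval r)
    have hrg : ρ.w r < ρ.w g := by
      rw [w_eq_nval ρ hr, w_eq_nval ρ (ne_zero_of_M ρ hgM)]
      exact_mod_cast hgval
    have hsumM : ρ.w 1 < ρ.w (r + g) := by rw [w_add_eq ρ hrg]; exact hgM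
    have h1 : ρ.w (x * (r + g)) ≤ ρ.w 1 := hα _ hsumM
    have h2 : ρ.w (x * g) ≤ ρ.w 1 := hα g hgM
    have hid : x * r = x * (r + g) - x * g := by ring
    rw [hid]
    exact le_trans (w_sub_le ρ _ _) (max_le h1 h2)
  have βF1 : ∀ r : R, r ≠ 0 → x * r ∉ Set.range (algebraMap F R) := by
    intro r hr hmem
    have hxr : x * r ≠ 0 := hdom hx hr
    obtain ⟨c, hc, hceq⟩ := mem_F1 hmem hxr
    obtain ⟨g, hgM⟩ := exists_M ρ
    have h2 : x * (r * g) = c • g := by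
      rw [← mul_assoc, hceq, ← Algebra.smul_def]
    have h4 := βR (r * g) (mul_M_ne_zero ρ hr hgM)
    rw [h2, ρ.N1 c g hc] at h4
    exact absurd hgM (not_lt_of_ge h4)
  have βσ : ∀ r : R, r ≠ 0 → σ.w 1 < σ.w (x * r) := by
    intro r hr
    by_contra hcon
    have hmem : x * r ∈ ρ.U ∩ σ.U := ⟨βR r hr, le_of_not_gt hcon⟩
    rw [hwa.2] at hmem
    exact βF1 r hr hmem
  have hxσ : σ.w 1 < σ.w x := by
    have := βσ 1 one_ne_zero; rwa [mul_one] at this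
  have βTσ : ∀ r : R, r ≠ 0 → ∃ e, HasT σ r e := by
    intro r hr
    refine ⟨_, T_of_exists_M σ hr hxσ ?_⟩
    rw [mul_comm]
    exact βσ r hr
  obtain ⟨M₂, hM₂1, hrow⟩ := exists_row ρ σ hwa
  obtain ⟨u, hu0, humρ, humσ⟩ := hrow M₂ le_rfl
  have huF : u ∉ Set.range (algebraMap F R) := by
    intro hmem
    obtain ⟨c, hc, hceq⟩ := mem_F1 hmem hu0
    rw [hceq, nval_algebraMap ρ hc] at humρ
    omega
  obtain ⟨r, e, hr0, hrT, hre⟩ := exists_negT σ hdom βTσ u hu0 humσ huF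
  have hrσ : σ.nval r = 0 := T_nonpos_val σ hr0 hrT (le_of_lt hre)
  set S : Set ℕ := {n | ∃ y : R, y ≠ 0 ∧ σ.nval (x * y) = n} with hSdef
  have hSne : S.Nonempty := ⟨σ.nval (x * 1), 1, one_ne_zero, rfl⟩
  obtain ⟨y₀, hy₀, hy₀v⟩ := Nat.sInf_mem hSne
  set s₀ := sInf S
  have hxy₀ : x * y₀ ≠ 0 := hdom hx hy₀
  have hMt : σ.w 1 < σ.w (x * y₀) := βσ y₀ hy₀
  have hs₀ : 1 ≤ s₀ := by
    have := (nval_pos_iff σ hxy₀).1 hMt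
    omega
  have hy₀r : y₀ * r ≠ 0 := hdom hy₀ hr0
  have htr0 : x * (y₀ * r) ≠ 0 := hdom hx hy₀r
  have hgeS : s₀ ≤ σ.nval (x * (y₀ * r)) := Nat.sInf_le ⟨y₀ * r, hy₀r, rfl⟩
  have hleS : σ.nval (x * (y₀ * r)) ≤ s₀ := by
    have h1 : x * (y₀ * r) = (x * y₀) * r := by ring
    rw [h1]
    have := nval_mul_le σ hxy₀ hr0 (by rw [← h1]; exact htr0)
    omega
  have hMtr : σ.w 1 < σ.w (x * (y₀ * r)) := βσ _ hy₀r
  have hweq : σ.w (x * y₀) = σ.w (x * (y₀ * r)) := by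
    rw [w_eq_nval σ hxy₀, w_eq_nval σ htr0]
    exact_mod_cast (by omega : σ.nval (x * y₀) = σ.nval (x * (y₀ * r)))
  obtain ⟨c, hc, hN4⟩ := σ.N4 (x * y₀) (x * (y₀ * r)) hMt hMtr hweq
  have key : x * y₀ - c • (x * (y₀ * r)) = x * (y₀ * (1 - c • r)) := by
    simp only [Algebra.smul_def]
    ring
  by_cases hq : (1 : R) - c • r = 0
  · have hrc : r = c⁻¹ • (1 : R) := by
      have h1 : (1 : R) = c • r := by rwa [sub_eq_zero] at hq
      rw [h1, smul_smul, inv_mul_cancel₀ hc, one_smul]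
    have hT0 : HasT σ r 0 := by
      have hh := T_F1 σ (inv_ne_zero hc)
      rwa [Algebra.algebraMap_eq_smul_one, ← hrc] at hh
    have := T_unique σ hrT hT0
    omega
  · have hy₀q : y₀ * (1 - c • r) ≠ 0 := hdom hy₀ hq
    have ht'0 : x * (y₀ * (1 - c • r)) ≠ 0 := hdom hx hy₀q
    have hmemS : s₀ ≤ σ.nval (x * (y₀ * (1 - c • r))) := Nat.sInf_le ⟨_, hy₀q, rfl⟩
    rw [key] at hN4
    rw [w_eq_nval σ ht'0, w_eq_nval σ hxy₀] at hN4
    have : σ.nval (x * (y₀ * (1 - c • r))) < σ.nval (x * y₀) := by exact_mod_cast hN4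
    omega

end NW13
end C3
section C4
open NearWeight
variable {F R : Type*} [Field F] [CommRing R] [Algebra F R]
namespace NW13

lemma wa_symm {ρ σ : NearWeight F R} (hwa : WellAgreeing ρ σ) : WellAgreeing σ ρ := by
  constructor
  · have himg : (Hset σ ρ Set.univ)ᶜ = Prod.swap '' (Hset ρ σ Set.univ)ᶜ := by
      ext p
      simp only [Set.mem_compl_iff, Set.mem_image]
      constructor
      · intro hp
        refine ⟨p.swap, ?_, Prod.swap_swap p⟩
        intro hc
        apply hp
        obtain ⟨f, _, hf0, hfp⟩ := hc
        exact ⟨f, Set.mem_univ f, hf0, by rw [← Prod.swap_swap p, ← hfp]; rfl⟩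
      · rintro ⟨q, hq, rfl⟩ hc
        apply hq
        obtain ⟨f, _, hf0, hfp⟩ := hc
        exact ⟨f, Set.mem_univ f, hf0, by simpa using congrArg Prod.swap hfp⟩
    rw [himg]
    exact hwa.1.image _
  · rw [Set.inter_comm]
    exact hwa.2

lemma pow_ne_zero' [Nontrivial R] (hdom : ∀ {f g : R}, f ≠ 0 → g ≠ 0 → f * g ≠ 0)
    {f : R} (hf : f ≠ 0) (k : ℕ) : f ^ k ≠ 0 := by
  induction k with
  | zero => rw [pow_zero]; exact one_ne_zero
  | succ n ih => rw [pow_succ]; exact hdom ih hf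

lemma exists_I_elem [Nontrivial R] (τ₁ τ₂ : NearWeight F R)
    (hdom : ∀ {f g : R}, f ≠ 0 → g ≠ 0 → f * g ≠ 0)
    (hT1 : ∀ x : R, x ≠ 0 → ∃ e, HasT τ₁ x e)
    (hT2 : ∀ x : R, x ≠ 0 → ∃ e, HasT τ₂ x e)
    (hrow : ∃ M₂ : ℕ, 1 ≤ M₂ ∧ ∀ m, M₂ ≤ m → ∃ u : R, u ≠ 0 ∧ τ₁.nval u = m ∧ τ₂.nval u = 0)
    (I : Ideal R) (hI0 : I ≠ ⊥) :
    ∃ Mb : ℕ, ∀ m, Mb ≤ m → ∃ t ∈ I, t ≠ 0 ∧ τ₁.nval t = m ∧ τ₂.nval t = 0 := by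
  obtain ⟨z, hzI, hz0⟩ := Submodule.exists_mem_ne_zero_of_ne_bot hI0
  obtain ⟨M₂, hM₂1, hrow⟩ := hrow
  obtain ⟨e1z, he1z⟩ := hT1 z hz0
  obtain ⟨e2z, he2z⟩ := hT2 z hz0
  -- an element with negative τ₂-tilde weight
  obtain ⟨u₁, hu₁0, hu₁1, hu₁2⟩ := hrow M₂ le_rfl
  have hu₁F : u₁ ∉ Set.range (algebraMap F R) := by
    intro hmem
    obtain ⟨c, hc, hceq⟩ := mem_F1 hmem hu₁0
    rw [hceq, nval_algebraMap τ₁ hc] at hu₁1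
    omega
  obtain ⟨f₀, e₀, hf₀0, hf₀T, hf₀e⟩ := exists_negT τ₂ hdom hT2 u₁ hu₁0 hu₁2 hu₁F
  obtain ⟨e1f₀, he1f₀⟩ := hT1 f₀ hf₀0
  set k : ℕ := e2z.toNat with hk
  set c : ℤ := e1z + (k : ℤ) * e1f₀ with hc
  refine ⟨M₂ + c.toNat + 1, fun m hm => ?_⟩
  have hm' : ((m : ℤ) - c).toNat = (m : ℤ) - c ∧ (M₂ : ℤ) ≤ (m : ℤ) - c := by
    have h1 : c ≤ c.toNat := Int.self_le_toNat c
    constructor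
    · rw [Int.toNat_of_nonneg (by omega)]
    · omega
  set m' : ℕ := ((m : ℤ) - c).toNat with hm'def
  have hm'2 : (m' : ℤ) = (m : ℤ) - c := hm'.1
  have hm'M₂ : M₂ ≤ m' := by omega
  obtain ⟨u, hu0, hu1, hu2⟩ := hrow m' hm'M₂
  have huM : τ₁.w 1 < τ₁.w u := by
    rw [nval_pos_iff τ₁ hu0]
    omega
  have huT1 : HasT τ₁ u (m' : ℤ) := by
    have := T_M τ₁ huM
    rwa [hu1] at this
  obtain ⟨e2u, he2u⟩ := hT2 u hu0
  have he2u0 : e2u ≤ 0 := by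
    have := T_le τ₂ hu0 he2u
    omega
  set t : R := z * (u * f₀ ^ k) with ht
  have hfk0 : f₀ ^ k ≠ 0 := pow_ne_zero' hdom hf₀0 k
  have ht0 : t ≠ 0 := hdom hz0 (hdom hu0 hfk0)
  have hT1t : HasT τ₁ t (e1z + ((m' : ℤ) + (k : ℤ) * e1f₀)) :=
    T_add τ₁ he1z (T_add τ₁ huT1 (T_pow τ₁ he1f₀ k))
  have hT2t : HasT τ₂ t (e2z + (e2u + (k : ℤ) * e₀)) :=
    T_add τ₂ he2z (T_add τ₂ he2u (T_pow τ₂ hf₀T k))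
  have hval1 : e1z + ((m' : ℤ) + (k : ℤ) * e1f₀) = (m : ℤ) := by
    rw [hm'2, hc]; ring
  have hval2 : e2z + (e2u + (k : ℤ) * e₀) ≤ 0 := by
    have hke : (k : ℤ) * e₀ ≤ (k : ℤ) * (-1) :=
      mul_le_mul_of_nonneg_left (by omega) (by positivity)
    have hkz : e2z ≤ (k : ℤ) := by rw [hk]; exact Int.self_le_toNat _
    omega
  rw [hval1] at hT1t
  have hm1 : (1 : ℤ) ≤ (m : ℤ) := by
    have : 1 ≤ M₂ + c.toNat + 1 := by omega
    omega
  have hfin1 : τ₁.nval t = m := by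
    have := (T_pos_val τ₁ ht0 hT1t hm1).2
    omega
  have hfin2 : τ₂.nval t = 0 := T_nonpos_val τ₂ ht0 hT2t hval2
  exact ⟨t, Ideal.mul_mem_right _ I hzI, ht0, hfin1, hfin2⟩

end NW13
end C4
section C5
open NearWeight
variable {F R : Type*} [Field F] [CommRing R] [Algebra F R]
namespace NW13

lemma w_eq_of_nval_eq (ρ : NearWeight F R) {f g : R} (hf : f ≠ 0) (hg : g ≠ 0)
    (h : ρ.nval f = ρ.nval g) : ρ.w f = ρ.w g := by
  rw [w_eq_nval ρ hf, w_eq_nval ρ hg, h]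

lemma w_smul_sub_le (ρ : NearWeight F R) {c : F} (hc : c ≠ 0) (f g : R) :
    ρ.w (f - c • g) ≤ max (ρ.w f) (ρ.w g) := by
  have := w_sub_le ρ f (c • g)
  rwa [ρ.N1 c g hc] at this

/-- the key reduction lemma for elements with equal value pairs -/
lemma LemD [Nontrivial R] (ρ σ : NearWeight F R) (hwa : WellAgreeing ρ σ)
    {f g : R} (hf : f ≠ 0) (hg : g ≠ 0)
    (h1 : ρ.nval f = ρ.nval g) (h2 : σ.nval f = σ.nval g) :
    ∃ c : F, c ≠ 0 ∧ (f - c • g = 0 ∨ (f - c • g ≠ 0 ∧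
      ρ.nval (f - c • g) + σ.nval (f - c • g) < ρ.nval f + σ.nval f)) := by
  by_cases hMρ : ρ.w 1 < ρ.w f
  · have hMρg : ρ.w 1 < ρ.w g := by
      rwa [w_eq_of_nval_eq ρ hf hg h1] at hMρ
    obtain ⟨c, hc, h4⟩ := ρ.N4 f g hMρ hMρg (w_eq_of_nval_eq ρ hf hg h1)
    refine ⟨c, hc, ?_⟩
    by_cases h0 : f - c • g = 0
    · exact Or.inl h0
    · refine Or.inr ⟨h0, ?_⟩
      have hρlt : ρ.nval (f - c • g) < ρ.nval f := by
        rw [w_eq_nval ρ h0, w_eq_nval ρ hf] at h4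
        exact_mod_cast h4
      have hσle : σ.nval (f - c • g) ≤ σ.nval f := by
        have h5 := w_smul_sub_le σ hc f g
        rw [← w_eq_of_nval_eq σ hf hg h2, max_self, w_eq_nval σ h0, w_eq_nval σ hf] at h5
        exact_mod_cast h5
      omega
  by_cases hMσ : σ.w 1 < σ.w f
  · have hMσg : σ.w 1 < σ.w g := by
      rwa [w_eq_of_nval_eq σ hf hg h2] at hMσ
    obtain ⟨c, hc, h4⟩ := σ.N4 f g hMσ hMσg (w_eq_of_nval_eq σ hf hg h2)
    refine ⟨c, hc, ?_⟩
    by_cases h0 : f - c • g = 0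
    · exact Or.inl h0
    · refine Or.inr ⟨h0, ?_⟩
      have hσlt : σ.nval (f - c • g) < σ.nval f := by
        rw [w_eq_nval σ h0, w_eq_nval σ hf] at h4
        exact_mod_cast h4
      have hρle : ρ.nval (f - c • g) ≤ ρ.nval f := by
        have h5 := w_smul_sub_le ρ hc f g
        rw [← w_eq_of_nval_eq ρ hf hg h1, max_self, w_eq_nval ρ h0, w_eq_nval ρ hf] at h5
        exact_mod_cast h5
      omega
  · -- both values are zero : f and g lie in F·1
    have hfU : f ∈ ρ.U ∩ σ.U := ⟨le_of_not_gt hMρ, le_of_not_gt hMσ⟩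
    have hgU : g ∈ ρ.U ∩ σ.U := by
      constructor
      · rw [NearWeight.U, Set.mem_setOf_eq, ← w_eq_of_nval_eq ρ hf hg h1]
        exact le_of_not_gt hMρ
      · rw [NearWeight.U, Set.mem_setOf_eq, ← w_eq_of_nval_eq σ hf hg h2]
        exact le_of_not_gt hMσ
    rw [hwa.2] at hfU hgU
    obtain ⟨a, ha, hfa⟩ := mem_F1 hfU hf
    obtain ⟨b, hb, hgb⟩ := mem_F1 hgU hg
    refine ⟨a / b, div_ne_zero ha hb, Or.inl ?_⟩
    rw [hfa, hgb, Algebra.smul_def, ← map_mul, div_mul_cancel₀ a hb, sub_self]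

end NW13
end C5
section C6
open NearWeight
variable {F R : Type*} [Field F] [CommRing R] [Algebra F R]
namespace NW13

lemma row_nonempty (ρ σ : NearWeight F R) (hwa : WellAgreeing ρ σ) (m : ℕ) :
    {n | (m, n) ∈ Hset ρ σ Set.univ}.Nonempty := by
  have hBad : {n : ℕ | (m, n) ∉ Hset ρ σ Set.univ}.Finite := by
    apply Set.Finite.subset (hwa.1.image Prod.snd)
    intro n hn
    exact ⟨(m, n), hn, rfl⟩
  obtain ⟨B, hB⟩ := hBad.bddAbove
  refine ⟨B + 1, ?_⟩
  by_contra hc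
  have := hB hc
  omega

lemma col_nonempty (ρ σ : NearWeight F R) (hwa : WellAgreeing ρ σ) (n : ℕ) :
    {m | (m, n) ∈ Hset ρ σ Set.univ}.Nonempty := by
  have hBad : {m : ℕ | (m, n) ∉ Hset ρ σ Set.univ}.Finite := by
    apply Set.Finite.subset (hwa.1.image Prod.fst)
    intro m hm
    exact ⟨(m, n), hm, rfl⟩
  obtain ⟨B, hB⟩ := hBad.bddAbove
  refine ⟨B + 1, ?_⟩
  by_contra hc
  have := hB hc
  omega

lemma yH_mem (ρ σ : NearWeight F R) (hwa : WellAgreeing ρ σ) (m : ℕ) :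
    (m, yH ρ σ m) ∈ Hset ρ σ Set.univ :=
  Nat.sInf_mem (row_nonempty ρ σ hwa m)

lemma xH_mem (ρ σ : NearWeight F R) (hwa : WellAgreeing ρ σ) (n : ℕ) :
    (xH ρ σ n, n) ∈ Hset ρ σ Set.univ :=
  Nat.sInf_mem (col_nonempty ρ σ hwa n)

lemma Gamma_sub_H (ρ σ : NearWeight F R) (hwa : WellAgreeing ρ σ) :
    Gamma ρ σ ⊆ Hset ρ σ Set.univ := by
  rintro p (⟨m, rfl⟩ | ⟨n, rfl⟩)
  · exact yH_mem ρ σ hwa m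
  · exact xH_mem ρ σ hwa n

lemma E_finite (ρ σ : NearWeight F R) (hwa : WellAgreeing ρ σ) (I : Ideal R)
    (hrowI : ∃ Mr : ℕ, ∀ m, Mr ≤ m → (m, 0) ∈ Hset ρ σ (I : Set R))
    (hcolI : ∃ Mc : ℕ, ∀ n, Mc ≤ n → (0, n) ∈ Hset ρ σ (I : Set R)) :
    (Gamma ρ σ ∩ (Hset ρ σ (I : Set R))ᶜ).Finite := by
  obtain ⟨Mr, hMr⟩ := hrowI
  obtain ⟨Mc, hMc⟩ := hcolI
  have hsub : Gamma ρ σ ∩ (Hset ρ σ (I : Set R))ᶜ ⊆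
      ((fun m => (m, yH ρ σ m)) '' (Prod.fst '' (Hset ρ σ Set.univ)ᶜ)) ∪
      ((fun n => (xH ρ σ n, n)) '' (Prod.snd '' (Hset ρ σ Set.univ)ᶜ)) ∪
      ((fun m => (m, (0 : ℕ))) '' Set.Iio Mr) ∪
      ((fun n => ((0 : ℕ), n)) '' Set.Iio Mc) := by
    rintro p ⟨hpΓ, hpI⟩
    rcases hpΓ with ⟨m, rfl⟩ | ⟨n, rfl⟩
    · by_cases hm : (m, 0) ∈ Hset ρ σ Set.univ
      · have hy0 : yH ρ σ m = 0 := Nat.sInf_eq_zero.mpr (Or.inl hm)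
        rw [hy0] at hpI ⊢
        by_cases hmM : Mr ≤ m
        · exact absurd (hMr m hmM) hpI
        · exact Or.inl (Or.inr ⟨m, Set.mem_Iio.mpr (lt_of_not_ge hmM), rfl⟩)
      · exact Or.inl (Or.inl (Or.inl ⟨m, ⟨(m, 0), hm, rfl⟩, rfl⟩))
    · by_cases hn : (0, n) ∈ Hset ρ σ Set.univ
      · have hx0 : xH ρ σ n = 0 := Nat.sInf_eq_zero.mpr (Or.inl hn)
        rw [hx0] at hpI ⊢
        by_cases hnM : Mc ≤ n
        · exact absurd (hMc n hnM) hpI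
        · exact Or.inr ⟨n, Set.mem_Iio.mpr (lt_of_not_ge hnM), rfl⟩
      · exact Or.inl (Or.inl (Or.inr ⟨n, ⟨(0, n), hn, rfl⟩, rfl⟩))
  refine Set.Finite.subset ?_ hsub
  refine (((((hwa.1.image Prod.fst).image _).union
    ((hwa.1.image Prod.snd).image _)).union
    ((Set.finite_Iio Mr).image _)).union
    ((Set.finite_Iio Mc).image _))

lemma mk_smul (I : Ideal R) (c : F) (x : R) :
    Ideal.Quotient.mk I (c • x) = c • Ideal.Quotient.mk I x := by
  rw [← Ideal.Quotient.mkₐ_eq_mk F I]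
  exact map_smul (Ideal.Quotient.mkₐ F I) c x

end NW13
end C6
section C7
open NearWeight
variable {F R : Type*} [Field F] [CommRing R] [Algebra F R]
namespace NW13

lemma span_step [Nontrivial R] (ρ σ : NearWeight F R) (hwa : WellAgreeing ρ σ)
    (I : Ideal R) (rep : ℕ × ℕ → R)
    (hrep : ∀ p ∈ Hset ρ σ Set.univ,
      rep p ≠ 0 ∧ ρ.nval (rep p) = p.1 ∧ σ.nval (rep p) = p.2) :
    ∀ n : ℕ, ∀ f : R, f ≠ 0 → ρ.nval f + σ.nval f ≤ n →
      Ideal.Quotient.mk I f ∈ Submodule.span F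
        ((fun p => Ideal.Quotient.mk I (rep p)) ''
          (Gamma ρ σ ∩ (Hset ρ σ (I : Set R))ᶜ)) := by
  intro n
  induction n using Nat.strong_induction_on with
  | _ n ih =>
  intro f hf hfn
  by_cases hfI : f ∈ I
  · rw [Ideal.Quotient.eq_zero_iff_mem.2 hfI]
    exact Submodule.zero_mem _
  have hpH : (ρ.nval f, σ.nval f) ∈ Hset ρ σ Set.univ := ⟨f, Set.mem_univ f, hf, rfl⟩
  by_cases hpI : (ρ.nval f, σ.nval f) ∈ Hset ρ σ (I : Set R)
  · -- reduce by an ideal element of the same value pair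
    obtain ⟨z, hzI, hz0, hzp⟩ := hpI
    have h1 : ρ.nval f = ρ.nval z := (congrArg Prod.fst hzp).symm
    have h2 : σ.nval f = σ.nval z := (congrArg Prod.snd hzp).symm
    obtain ⟨c, hc, hcase⟩ := LemD ρ σ hwa hf hz0 h1 h2
    have hczI : c • z ∈ I := by
      rw [Algebra.smul_def]; exact I.mul_mem_left _ hzI
    rcases hcase with h0 | ⟨h0, hlt⟩
    · exfalso
      apply hfI
      have hfz : f = c • z := by rwa [sub_eq_zero] at h0
      rw [hfz]; exact hczI
    · have hmk : Ideal.Quotient.mk I f = Ideal.Quotient.mk I (f - c • z) := by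
        rw [map_sub, Ideal.Quotient.eq_zero_iff_mem.2 hczI, sub_zero]
      rw [hmk]
      exact ih _ (lt_of_lt_of_le hlt hfn) _ h0 le_rfl
  by_cases hpΓ : (ρ.nval f, σ.nval f) ∈ Gamma ρ σ
  · -- f has a value pair in Γ \ H(I) : reduce against the chosen representative
    have hpE : (ρ.nval f, σ.nval f) ∈ Gamma ρ σ ∩ (Hset ρ σ (I : Set R))ᶜ := ⟨hpΓ, hpI⟩
    obtain ⟨hg0, hg1, hg2⟩ := hrep _ hpH
    obtain ⟨c, hc, hcase⟩ := LemD ρ σ hwa hf hg0 hg1.symm hg2.symm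
    have hgS : Ideal.Quotient.mk I (rep (ρ.nval f, σ.nval f)) ∈ Submodule.span F
        ((fun p => Ideal.Quotient.mk I (rep p)) ''
          (Gamma ρ σ ∩ (Hset ρ σ (I : Set R))ᶜ)) :=
      Submodule.subset_span ⟨_, hpE, rfl⟩
    rcases hcase with h0 | ⟨h0, hlt⟩
    · have hfg : f = c • rep (ρ.nval f, σ.nval f) := by rwa [sub_eq_zero] at h0
      rw [hfg, mk_smul]
      exact Submodule.smul_mem _ c hgS
    · have hsplit : Ideal.Quotient.mk I f =
          c • Ideal.Quotient.mk I (rep (ρ.nval f, σ.nval f)) +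
          Ideal.Quotient.mk I (f - c • rep (ρ.nval f, σ.nval f)) := by
        rw [← mk_smul, ← map_add]
        congr 1
        abel
      rw [hsplit]
      exact Submodule.add_mem _ (Submodule.smul_mem _ c hgS)
        (ih _ (lt_of_lt_of_le hlt hfn) _ h0 le_rfl)
  · -- value pair not in Γ : reduce against a row-minimal element
    have ha : 0 < ρ.nval f := by
      by_contra hc0
      apply hpΓ
      right
      refine ⟨σ.nval f, ?_⟩
      have hmem0 : (0 : ℕ) ∈ {m | (m, σ.nval f) ∈ Hset ρ σ Set.univ} := by
        have : ρ.nval f = 0 := by omega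
        rw [← this]
        exact hpH
      have hx0 : xH ρ σ (σ.nval f) = 0 := Nat.eq_zero_of_le_zero (Nat.sInf_le hmem0)
      have : ρ.nval f = 0 := by omega
      rw [hx0, this]
    have hyle : yH ρ σ (ρ.nval f) ≤ σ.nval f :=
      Nat.sInf_le (show σ.nval f ∈ {m | (ρ.nval f, m) ∈ Hset ρ σ Set.univ} from hpH)
    have hylt : yH ρ σ (ρ.nval f) < σ.nval f := by
      rcases lt_or_eq_of_le hyle with h | h
      · exact h
      · exfalso
        apply hpΓ
        left
        exact ⟨ρ.nval f, by rw [h]⟩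
    have hmemy : (ρ.nval f, yH ρ σ (ρ.nval f)) ∈ Hset ρ σ Set.univ :=
      Nat.sInf_mem (⟨σ.nval f, hpH⟩ :
        {m | (ρ.nval f, m) ∈ Hset ρ σ Set.univ}.Nonempty)
    obtain ⟨g, -, hg0, hgp⟩ := hmemy
    have hga : ρ.nval g = ρ.nval f := congrArg Prod.fst hgp
    have hgy : σ.nval g = yH ρ σ (ρ.nval f) := congrArg Prod.snd hgp
    have hMf : ρ.w 1 < ρ.w f := by rw [nval_pos_iff ρ hf]; exact ha
    have hMg : ρ.w 1 < ρ.w g := by rw [nval_pos_iff ρ hg0]; omega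
    obtain ⟨c, hc, h4⟩ := ρ.N4 f g hMf hMg (w_eq_of_nval_eq ρ hf hg0 hga.symm)
    have hgmem := ih (ρ.nval g + σ.nval g) (by omega) g hg0 le_rfl
    by_cases h0 : f - c • g = 0
    · have hfg : f = c • g := by rwa [sub_eq_zero] at h0
      rw [hfg, mk_smul]
      exact Submodule.smul_mem _ c hgmem
    · have hρlt : ρ.nval (f - c • g) < ρ.nval f := by
        rw [w_eq_nval ρ h0, w_eq_nval ρ hf] at h4
        exact_mod_cast h4
      have hσle : σ.nval (f - c • g) ≤ max (σ.nval f) (σ.nval g) := by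
        have h5 := w_smul_sub_le σ hc f g
        rw [w_eq_nval σ h0, w_eq_nval σ hf, w_eq_nval σ hg0] at h5
        rcases max_cases ((σ.nval f : WithBot ℕ)) ((σ.nval g : WithBot ℕ)) with
          ⟨he, _⟩ | ⟨he, _⟩ <;> rw [he] at h5
        · exact le_trans (by exact_mod_cast h5) (le_max_left _ _)
        · exact le_trans (by exact_mod_cast h5) (le_max_right _ _)
      have hsplit : Ideal.Quotient.mk I f =
          c • Ideal.Quotient.mk I g + Ideal.Quotient.mk I (f - c • g) := by
        rw [← mk_smul, ← map_add]
        congr 1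
        abel
      rw [hsplit]
      refine Submodule.add_mem _ (Submodule.smul_mem _ c hgmem) ?_
      exact ih _ (by omega) _ h0 le_rfl

end NW13
end C7
open NearWeight NW13 in
theorem stmt13
    (hinj : Function.Injective (algebraMap F R))
    (hsur : ¬ Function.Surjective (algebraMap F R))
    (ρ σ : NearWeight F R) (hwa : NearWeight.WellAgreeing ρ σ)
    (I : Ideal R) (hI0 : I ≠ ⊥) (hIT : I ≠ ⊤) :
    FiniteDimensional F (R ⧸ I) ∧
    Module.finrank F (R ⧸ I) ≤
      (NearWeight.Gamma ρ σ ∩ (NearWeight.Hset ρ σ (I : Set R))ᶜ).ncard := by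
  classical
  haveI : Nontrivial R :=
    ⟨⟨1, 0, fun h => one_ne_zero (hinj (by rw [map_one, map_zero, h]))⟩⟩
  have hdom : ∀ {f g : R}, f ≠ 0 → g ≠ 0 → f * g ≠ 0 :=
    fun hf hg => mul_ne_zero' ρ σ hwa hf hg
  have hwa' := wa_symm hwa
  have hTρ : ∀ x : R, x ≠ 0 → ∃ e, HasT ρ x e := T_exists ρ σ hwa
  have hTσ : ∀ x : R, x ≠ 0 → ∃ e, HasT σ x e := T_exists σ ρ hwa'
  have hrowI : ∃ Mr : ℕ, ∀ m, Mr ≤ m → (m, 0) ∈ Hset ρ σ (I : Set R) := by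
    obtain ⟨Mb, hMb⟩ := exists_I_elem ρ σ hdom hTρ hTσ (exists_row ρ σ hwa) I hI0
    refine ⟨Mb, fun m hm => ?_⟩
    obtain ⟨t, htI, ht0, h1, h2⟩ := hMb m hm
    exact ⟨t, htI, ht0, by rw [h1, h2]⟩
  have hcolI : ∃ Mc : ℕ, ∀ n, Mc ≤ n → (0, n) ∈ Hset ρ σ (I : Set R) := by
    obtain ⟨Mb, hMb⟩ := exists_I_elem σ ρ hdom hTσ hTρ (exists_row σ ρ hwa') I hI0
    refine ⟨Mb, fun n hn => ?_⟩
    obtain ⟨t, htI, ht0, h1, h2⟩ := hMb n hn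
    exact ⟨t, htI, ht0, by rw [h1, h2]⟩
  have hEfin := E_finite ρ σ hwa I hrowI hcolI
  have hrepex : ∀ p : ℕ × ℕ, ∃ r : R, p ∈ Hset ρ σ Set.univ →
      (r ≠ 0 ∧ ρ.nval r = p.1 ∧ σ.nval r = p.2) := by
    intro p
    by_cases hp : p ∈ Hset ρ σ Set.univ
    · obtain ⟨f, -, h0, hv⟩ := hp
      exact ⟨f, fun _ => ⟨h0, congrArg Prod.fst hv, congrArg Prod.snd hv⟩⟩
    · exact ⟨1, fun hc => absurd hc hp⟩
  choose rep hrep using hrepex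
  have hspan := span_step ρ σ hwa I rep (fun p hp => hrep p hp)
  set s : Set (R ⧸ I) := (fun p => Ideal.Quotient.mk I (rep p)) ''
    (Gamma ρ σ ∩ (Hset ρ σ (I : Set R))ᶜ) with hsdef
  have hstop : Submodule.span F s = ⊤ := by
    rw [eq_top_iff]
    rintro q -
    obtain ⟨f, rfl⟩ := Ideal.Quotient.mk_surjective q
    by_cases hf : f = 0
    · rw [hf, map_zero]; exact Submodule.zero_mem _
    · exact hspan (ρ.nval f + σ.nval f) f hf le_rfl
  have hsfin : s.Finite := hEfin.image _
  haveI : Module.Finite F (R ⧸ I) := by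
    rw [Module.finite_def]
    exact ⟨hsfin.toFinset, by rw [Set.Finite.coe_toFinset]; exact hstop⟩
  refine ⟨inferInstance, ?_⟩
  haveI := hsfin.fintype
  have h1 : Module.finrank F (R ⧸ I) = Module.finrank F (Submodule.span F s) := by
    rw [hstop]
    exact (finrank_top F _).symm
  calc Module.finrank F (R ⧸ I) = Module.finrank F (Submodule.span F s) := h1
  _ ≤ s.toFinset.card := finrank_span_le_card s
  _ = s.ncard := (Set.ncard_eq_toFinset_card' s).symm
  _ ≤ (Gamma ρ σ ∩ (Hset ρ σ (I : Set R))ᶜ).ncard := Set.ncard_image_le hEfin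
end

section
/- Let R be a commutative F-algebra admitting two well agreeing near weights ρ and σ, so that R is an integral domain, and let K be its field of fractions. Then the transcendence degree of K over F is one; equivalently, the Krull dimension of R is one. -/
namespace NearWeightAux
open NearWeight Polynomial

lemma wb_le_of_lt_succ {x : WithBot ℕ} {A : ℕ} (h : x < ((A+1 : ℕ) : WithBot ℕ)) :
    x ≤ (A : WithBot ℕ) := by
  cases x with
  | bot => exact bot_le
  | coe n =>
    rw [Nat.cast_withBot] at h ⊢
    exact WithBot.coe_le_coe.mpr (Nat.lt_succ_iff.mp (WithBot.coe_lt_coe.mp h))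

lemma wb_le_of_le_ne {x : WithBot ℕ} {A : ℕ} (h : x ≤ ((A+1 : ℕ) : WithBot ℕ))
    (hne : x ≠ ((A+1 : ℕ) : WithBot ℕ)) : x ≤ (A : WithBot ℕ) :=
  wb_le_of_lt_succ (lt_of_le_of_ne h hne)

variable {F R : Type*} [Field F] [CommRing R] [Algebra F R]


lemma wb_coe_lt_coe {m k : ℕ} : ((m : ℕ) : WithBot ℕ) < ((k : ℕ) : WithBot ℕ) ↔ m < k := by
  rw [Nat.cast_withBot, Nat.cast_withBot]; exact WithBot.coe_lt_coe

lemma wb_coe_le_coe {m k : ℕ} : ((m : ℕ) : WithBot ℕ) ≤ ((k : ℕ) : WithBot ℕ) ↔ m ≤ k := by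
  rw [Nat.cast_withBot, Nat.cast_withBot]; exact WithBot.coe_le_coe

lemma wb_zero_lt_coe {k : ℕ} (hk : 0 < k) : (0 : WithBot ℕ) < ((k : ℕ) : WithBot ℕ) := by
  have h0 : ((0 : ℕ) : WithBot ℕ) = (0 : WithBot ℕ) := by norm_cast
  rw [← h0]; exact wb_coe_lt_coe.mpr hk

lemma wb_bot_lt_coe (k : ℕ) : (⊥ : WithBot ℕ) < ((k : ℕ) : WithBot ℕ) := by
  rw [Nat.cast_withBot]; exact WithBot.bot_lt_coe k

lemma wb_coe_ne_bot (k : ℕ) : ((k : ℕ) : WithBot ℕ) ≠ ⊥ := (wb_bot_lt_coe k).ne'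

lemma w_one (ρ : NearWeight F R) [Nontrivial R] : ρ.w 1 = 0 :=
  ρ.norm0 1 one_ne_zero le_rfl

lemma w_ne_bot (ρ : NearWeight F R) {f : R} (hf : f ≠ 0) : ρ.w f ≠ ⊥ :=
  fun h => hf ((ρ.N0 f).1 h)

lemma w_zero (ρ : NearWeight F R) : ρ.w 0 = ⊥ := (ρ.N0 0).2 rfl

lemma w_eq_nval (ρ : NearWeight F R) {f : R} (hf : f ≠ 0) :
    ρ.w f = (ρ.nval f : WithBot ℕ) := by
  cases hw : ρ.w f with
  | bot => exact absurd hw (w_ne_bot ρ hf)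
  | coe n => simp [NearWeight.nval, hw, Nat.cast_withBot]

lemma w_neg (ρ : NearWeight F R) (f : R) : ρ.w (-f) = ρ.w f := by
  have h := ρ.N1 (-1) f (by simp)
  rwa [neg_one_smul] at h

lemma w_add_lt_left (ρ : NearWeight F R) {f g : R} (h : ρ.w g < ρ.w f) :
    ρ.w (f + g) = ρ.w f := by
  refine le_antisymm ((ρ.N2 f g).trans (by rw [max_eq_left h.le])) ?_
  have h2 : ρ.w f ≤ max (ρ.w (f + g)) (ρ.w g) := by
    have := ρ.N2 (f + g) (-g)
    rwa [add_neg_cancel_right, w_neg] at this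
  rcases le_max_iff.mp h2 with h3 | h3
  · exact h3
  · exact absurd h3 (not_le.mpr h)

lemma ne_zero_of_w_pos (ρ : NearWeight F R) [Nontrivial R] {f : R} (hf : ρ.w 1 < ρ.w f) :
    f ≠ 0 := by
  intro h0
  rw [h0, w_zero] at hf
  exact absurd hf (by simp)

lemma nval_pos (ρ : NearWeight F R) [Nontrivial R] {f : R} (hf : ρ.w 1 < ρ.w f) :
    1 ≤ ρ.nval f := by
  have h0 := w_eq_nval ρ (ne_zero_of_w_pos ρ hf)
  rw [w_one] at hf
  rw [h0] at hf
  rcases Nat.eq_zero_or_pos (ρ.nval f) with h | h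
  · rw [h, Nat.cast_zero] at hf
    exact absurd hf (lt_irrefl _)
  · exact h

lemma w_pow (ρ : NearWeight F R) [Nontrivial R] {f : R} (hf : ρ.w 1 < ρ.w f) :
    ∀ n, 1 ≤ n → ρ.w 1 < ρ.w (f ^ n) ∧ ρ.w (f ^ n) = ((n * ρ.nval f : ℕ) : WithBot ℕ) := by
  intro n hn
  induction n, hn using Nat.le_induction with
  | base =>
    constructor
    · rwa [pow_one]
    · rw [pow_one, w_eq_nval ρ (ne_zero_of_w_pos ρ hf), one_mul]
  | succ n hn ih =>
    have h5 := ρ.N5' (f ^ n) f ih.1 hf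
    rw [← pow_succ] at h5
    have h1 : 1 ≤ ρ.nval f := nval_pos ρ hf
    constructor
    · rw [w_one, h5, ih.2, w_eq_nval ρ (ne_zero_of_w_pos ρ hf), ← Nat.cast_add]
      exact wb_zero_lt_coe (by positivity)
    · rw [h5, ih.2, w_eq_nval ρ (ne_zero_of_w_pos ρ hf), ← Nat.cast_add]
      congr 1
      ring

lemma w_pow_le (ρ : NearWeight F R) [Nontrivial R] {f : R} (hf : f ≠ 0) (n : ℕ) :
    ρ.w (f ^ n) ≤ ((n * ρ.nval f : ℕ) : WithBot ℕ) := by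
  induction n with
  | zero => simp [pow_zero, w_one]
  | succ n ih =>
    calc ρ.w (f ^ (n+1)) = ρ.w (f ^ n * f) := by rw [pow_succ]
      _ ≤ ρ.w (f ^ n) + ρ.w f := ρ.N5 _ _
      _ ≤ ((n * ρ.nval f : ℕ) : WithBot ℕ) + ((ρ.nval f : ℕ) : WithBot ℕ) :=
          add_le_add ih (w_eq_nval ρ hf).le
      _ = (((n+1) * ρ.nval f : ℕ) : WithBot ℕ) := by rw [← Nat.cast_add]; congr 1; ring

lemma w_sum_lt (ρ : NearWeight F R) {ι : Type*} (s : Finset ι) (g : ι → R) {C : WithBot ℕ}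
    (hC : ⊥ < C) (h : ∀ i ∈ s, ρ.w (g i) < C) : ρ.w (∑ i ∈ s, g i) < C := by
  classical
  induction s using Finset.induction_on with
  | empty => simpa [w_zero] using hC
  | insert a t hx ih =>
    rw [Finset.sum_insert hx]
    refine lt_of_le_of_lt (ρ.N2 _ _) (max_lt (h a (Finset.mem_insert_self a t)) ?_)
    exact ih fun i hi => h i (Finset.mem_insert_of_mem hi)

lemma transcendental_of_w_pos (ρ : NearWeight F R) [Nontrivial R] {f : R}
    (hf : ρ.w 1 < ρ.w f) : Transcendental F f := by
  rintro ⟨p, hp0, hpe⟩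
  have hfz : f ≠ 0 := ne_zero_of_w_pos ρ hf
  set a := ρ.nval f with ha
  have ha1 : 1 ≤ a := nval_pos ρ hf
  set n := p.natDegree with hn
  rcases Nat.eq_zero_or_pos n with h0 | hpos
  · obtain ⟨c, rfl⟩ := Polynomial.natDegree_eq_zero.mp h0
    have hc : c ≠ 0 := fun h => hp0 (by simp [h])
    rw [Polynomial.aeval_C] at hpe
    exact hc ((_root_.map_eq_zero (algebraMap F R)).mp hpe)
  · have expand : (Polynomial.aeval f) p = ∑ i ∈ Finset.range (n + 1), p.coeff i • f ^ i :=
      Polynomial.aeval_eq_sum_range f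
    rw [Finset.sum_range_succ] at expand
    have hcn : p.coeff n ≠ 0 := Polynomial.leadingCoeff_ne_zero.mpr hp0
    have htop : ρ.w (p.coeff n • f ^ n) = ((n * a : ℕ) : WithBot ℕ) := by
      rw [ρ.N1 _ _ hcn]
      exact (w_pow ρ hf n hpos).2
    have hrest : ρ.w (∑ i ∈ Finset.range n, p.coeff i • f ^ i) < ((n * a : ℕ) : WithBot ℕ) := by
      refine w_sum_lt ρ _ _ (wb_bot_lt_coe _) ?_
      intro i hi
      have hin : i < n := Finset.mem_range.mp hi
      by_cases hc : p.coeff i = 0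
      · rw [hc, zero_smul, w_zero]
        exact wb_bot_lt_coe _
      · rw [ρ.N1 _ _ hc]
        rcases Nat.eq_zero_or_pos i with hi0 | hi1
        · rw [hi0, pow_zero, w_one]
          exact wb_zero_lt_coe (by positivity)
        · rw [(w_pow ρ hf i hi1).2]
          exact wb_coe_lt_coe.mpr (by nlinarith)
    have hw : ρ.w ((Polynomial.aeval f) p) = ((n * a : ℕ) : WithBot ℕ) := by
      rw [expand, add_comm]
      rw [w_add_lt_left ρ (by rw [htop]; exact hrest)]
      exact htop
    rw [hpe, w_zero] at hw
    exact wb_coe_ne_bot _ hw.symm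

section Vsub
open Submodule

def Vsub (ρ σ : NearWeight F R) (A B : ℕ) : Submodule F R where
  carrier := {g | ρ.w g ≤ ((A : ℕ) : WithBot ℕ) ∧ σ.w g ≤ ((B : ℕ) : WithBot ℕ)}
  add_mem' := fun {a b} ha hb =>
    ⟨(ρ.N2 a b).trans (max_le ha.1 hb.1), (σ.N2 a b).trans (max_le ha.2 hb.2)⟩
  zero_mem' := ⟨by rw [w_zero]; exact bot_le, by rw [w_zero]; exact bot_le⟩
  smul_mem' := fun c x hx => by
    by_cases hc : c = 0
    · rw [hc, zero_smul]
      exact ⟨by rw [w_zero]; exact bot_le, by rw [w_zero]; exact bot_le⟩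
    · rw [Set.mem_setOf_eq, ρ.N1 c x hc, σ.N1 c x hc]
      exact hx

lemma mem_Vsub {ρ σ : NearWeight F R} {A B : ℕ} {g : R} :
    g ∈ Vsub ρ σ A B ↔ ρ.w g ≤ ((A : ℕ) : WithBot ℕ) ∧ σ.w g ≤ ((B : ℕ) : WithBot ℕ) :=
  Iff.rfl

lemma Vsub_swap (ρ σ : NearWeight F R) (A B : ℕ) : Vsub σ ρ B A = Vsub ρ σ A B := by
  ext g
  exact and_comm

lemma rank_step (ρ σ : NearWeight F R) [Nontrivial R] (A B : ℕ) :
    Module.rank F (Vsub ρ σ (A+1) B) ≤ Module.rank F (Vsub ρ σ A B) + 1 := by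
  by_cases hex : ∃ g : R, ρ.w g = ((A+1 : ℕ) : WithBot ℕ) ∧ σ.w g ≤ ((B : ℕ) : WithBot ℕ)
  · obtain ⟨f, hf1, hf2⟩ := hex
    have hVle : Vsub ρ σ (A+1) B ≤ Vsub ρ σ A B ⊔ Submodule.span F {f} := by
      rintro g ⟨hg1, hg2⟩
      by_cases hg : ρ.w g = ((A+1 : ℕ) : WithBot ℕ)
      · have hMg : ρ.w 1 < ρ.w g := by
          rw [w_one, hg]; exact wb_zero_lt_coe A.succ_pos
        have hMf : ρ.w 1 < ρ.w f := by
          rw [w_one, hf1]; exact wb_zero_lt_coe A.succ_pos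
        obtain ⟨c, hc0, hlt⟩ := ρ.N4 g f hMg hMf (by rw [hg, hf1])
        have h1 : ρ.w (g - c • f) ≤ ((A : ℕ) : WithBot ℕ) :=
          wb_le_of_lt_succ (by rw [← hg]; exact hlt)
        have h2 : σ.w (g - c • f) ≤ ((B : ℕ) : WithBot ℕ) := by
          have hN2 := σ.N2 g (-(c • f))
          rw [← sub_eq_add_neg, w_neg, σ.N1 c f hc0] at hN2
          exact hN2.trans (max_le hg2 hf2)
        refine Submodule.mem_sup.mpr ⟨g - c • f, ⟨h1, h2⟩, c • f,
          Submodule.smul_mem _ c (Submodule.mem_span_singleton_self f), by ring⟩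
      · exact Submodule.mem_sup_left ⟨wb_le_of_le_ne hg1 hg, hg2⟩
    calc Module.rank F (Vsub ρ σ (A+1) B)
        ≤ Module.rank F ↥(Vsub ρ σ A B ⊔ Submodule.span F {f}) := Submodule.rank_mono hVle
      _ ≤ Module.rank F (Vsub ρ σ A B) + Module.rank F (Submodule.span F {f}) :=
          Submodule.rank_add_le_rank_add_rank _ _
      _ ≤ Module.rank F (Vsub ρ σ A B) + 1 := by
          refine add_le_add_right ((rank_span_le _).trans ?_) _
          rw [Cardinal.mk_singleton]
  · have hVle : Vsub ρ σ (A+1) B ≤ Vsub ρ σ A B := by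
      rintro g ⟨hg1, hg2⟩
      have hg : ρ.w g ≠ ((A+1 : ℕ) : WithBot ℕ) := fun h => hex ⟨g, h, hg2⟩
      exact ⟨wb_le_of_le_ne hg1 hg, hg2⟩
    exact (Submodule.rank_mono hVle).trans (self_le_add_right _ 1)

lemma rank_V (ρ σ : NearWeight F R) [Nontrivial R]
    (hU : ρ.U ∩ σ.U = Set.range (algebraMap F R)) :
    ∀ n A B : ℕ, A + B = n →
      Module.rank F (Vsub ρ σ A B) ≤ ((A + B + 1 : ℕ) : Cardinal) := by
  intro n
  induction n with
  | zero =>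
    intro A B hAB
    obtain ⟨rfl, rfl⟩ : A = 0 ∧ B = 0 := by omega
    have hle : Vsub ρ σ 0 0 ≤ Submodule.span F {(1 : R)} := by
      rintro g ⟨h1, h2⟩
      by_cases hg : g = 0
      · rw [hg]; exact Submodule.zero_mem _
      · have hgU : g ∈ ρ.U ∩ σ.U := by
          constructor
          · show ρ.w g ≤ ρ.w 1
            rw [w_one]; simpa using h1
          · show σ.w g ≤ σ.w 1
            rw [w_one]; simpa using h2
        rw [hU] at hgU
        obtain ⟨c, rfl⟩ := hgU
        exact Submodule.mem_span_singleton.mpr ⟨c, (Algebra.algebraMap_eq_smul_one c).symm⟩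
    refine (Submodule.rank_mono hle).trans ((rank_span_le _).trans ?_)
    rw [Cardinal.mk_singleton]
    norm_num
  | succ n ih =>
    intro A B hAB
    match A, B, hAB with
    | 0, B, hAB =>
      have hB : B = n + 1 := by omega
      subst hB
      have e1 : Module.rank F (Vsub ρ σ 0 (n+1)) = Module.rank F (Vsub σ ρ (n+1) 0) := by
        rw [Vsub_swap]
      have e2 : Module.rank F (Vsub σ ρ n 0) = Module.rank F (Vsub ρ σ 0 n) := by
        rw [Vsub_swap]
      calc Module.rank F (Vsub ρ σ 0 (n+1))
          = Module.rank F (Vsub σ ρ (n+1) 0) := e1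
        _ ≤ Module.rank F (Vsub σ ρ n 0) + 1 := rank_step σ ρ n 0
        _ = Module.rank F (Vsub ρ σ 0 n) + 1 := by rw [e2]
        _ ≤ ((0 + n + 1 : ℕ) : Cardinal) + 1 := add_le_add_left (ih 0 n (by omega)) 1
        _ = ((0 + (n+1) + 1 : ℕ) : Cardinal) := by push_cast; ring
    | (A+1), B, hAB =>
      calc Module.rank F (Vsub ρ σ (A+1) B)
          ≤ Module.rank F (Vsub ρ σ A B) + 1 := rank_step ρ σ A B
        _ ≤ ((A + B + 1 : ℕ) : Cardinal) + 1 := add_le_add_left (ih A B (by omega)) 1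
        _ = (((A+1) + B + 1 : ℕ) : Cardinal) := by push_cast; ring

end Vsub

lemma depend (ρ σ : NearWeight F R) [IsDomain R]
    (hU : ρ.U ∩ σ.U = Set.range (algebraMap F R)) {a b : R} (ha : a ≠ 0) (hb : b ≠ 0) :
    ∃ q : Polynomial (Polynomial F), q ≠ 0 ∧
      Polynomial.eval₂ (Polynomial.eval₂RingHom (algebraMap F R) a) b q = 0 := by
  classical
  set s : ℕ := ρ.nval a + ρ.nval b + σ.nval a + σ.nval b with hs
  set N : ℕ := s + 1 with hN
  set A : ℕ := N * (ρ.nval a + ρ.nval b) with hA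
  set B : ℕ := N * (σ.nval a + σ.nval b) with hB
  have hmemV : ∀ p : Fin (N+1) × Fin (N+1),
      a ^ (p.1 : ℕ) * b ^ (p.2 : ℕ) ∈ Vsub ρ σ A B := by
    intro p
    constructor
    · calc ρ.w (a ^ (p.1 : ℕ) * b ^ (p.2 : ℕ))
          ≤ ρ.w (a ^ (p.1 : ℕ)) + ρ.w (b ^ (p.2 : ℕ)) := ρ.N5 _ _
        _ ≤ (((p.1 : ℕ) * ρ.nval a : ℕ) : WithBot ℕ) + (((p.2 : ℕ) * ρ.nval b : ℕ) : WithBot ℕ) :=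
            add_le_add (w_pow_le ρ ha _) (w_pow_le ρ hb _)
        _ = (((p.1 : ℕ) * ρ.nval a + (p.2 : ℕ) * ρ.nval b : ℕ) : WithBot ℕ) := by
            rw [Nat.cast_add]
        _ ≤ ((A : ℕ) : WithBot ℕ) := by
            refine wb_coe_le_coe.mpr ?_
            have h1 : (p.1 : ℕ) ≤ N := Fin.is_le p.1
            have h2 : (p.2 : ℕ) ≤ N := Fin.is_le p.2
            rw [hA]
            nlinarith
    · calc σ.w (a ^ (p.1 : ℕ) * b ^ (p.2 : ℕ))
          ≤ σ.w (a ^ (p.1 : ℕ)) + σ.w (b ^ (p.2 : ℕ)) := σ.N5 _ _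
        _ ≤ (((p.1 : ℕ) * σ.nval a : ℕ) : WithBot ℕ) + (((p.2 : ℕ) * σ.nval b : ℕ) : WithBot ℕ) :=
            add_le_add (w_pow_le σ ha _) (w_pow_le σ hb _)
        _ = (((p.1 : ℕ) * σ.nval a + (p.2 : ℕ) * σ.nval b : ℕ) : WithBot ℕ) := by
            rw [Nat.cast_add]
        _ ≤ ((B : ℕ) : WithBot ℕ) := by
            refine wb_coe_le_coe.mpr ?_
            have h1 : (p.1 : ℕ) ≤ N := Fin.is_le p.1
            have h2 : (p.2 : ℕ) ≤ N := Fin.is_le p.2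
            rw [hB]
            nlinarith
  set v : Fin (N+1) × Fin (N+1) → (Vsub ρ σ A B) :=
    fun p => ⟨a ^ (p.1 : ℕ) * b ^ (p.2 : ℕ), hmemV p⟩ with hv
  have hnli : ¬ LinearIndependent F v := by
    intro hli
    have h1 := hli.cardinal_lift_le_rank
    have h2 := rank_V ρ σ hU (A + B) A B rfl
    have hcard : (Cardinal.mk (Fin (N+1) × Fin (N+1))) = (((N+1) * (N+1) : ℕ) : Cardinal) := by
      simp [Cardinal.mk_fintype]
    rw [hcard, Cardinal.lift_natCast] at h1
    have h3 := h1.trans (Cardinal.lift_le.mpr h2)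
    rw [Cardinal.lift_natCast] at h3
    have h4 : (N+1) * (N+1) ≤ A + B + 1 := by exact_mod_cast h3
    have h5 : A + B = N * s := by rw [hA, hB, hs]; ring
    rw [h5, hN] at h4
    nlinarith
  obtain ⟨g, hsum, p₀, hp₀⟩ := Fintype.not_linearIndependent_iff.mp hnli
  have hsumR : (∑ p : Fin (N+1) × Fin (N+1), g p • (a ^ (p.1 : ℕ) * b ^ (p.2 : ℕ))) = (0 : R) := by
    have h := congrArg (Subtype.val) hsum
    push_cast at h
    simpa [hv] using h
  refine ⟨∑ p : Fin (N+1) × Fin (N+1),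
      Polynomial.monomial (p.2 : ℕ) (Polynomial.monomial (p.1 : ℕ) (g p)), ?_, ?_⟩
  · intro hq0
    have hc : ((∑ p : Fin (N+1) × Fin (N+1),
        Polynomial.monomial (p.2 : ℕ) (Polynomial.monomial (p.1 : ℕ) (g p))).coeff
          (p₀.2 : ℕ)).coeff (p₀.1 : ℕ) = g p₀ := by
      rw [Polynomial.finset_sum_coeff]
      rw [Polynomial.finset_sum_coeff]
      rw [Finset.sum_eq_single p₀]
      · rw [Polynomial.coeff_monomial, if_pos rfl, Polynomial.coeff_monomial, if_pos rfl]
      · intro p _ hne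
        rw [Polynomial.coeff_monomial]
        by_cases h2 : (p.2 : ℕ) = (p₀.2 : ℕ)
        · rw [if_pos h2, Polynomial.coeff_monomial]
          by_cases h1 : (p.1 : ℕ) = (p₀.1 : ℕ)
          · exact absurd (Prod.ext (Fin.val_injective h1) (Fin.val_injective h2)) hne
          · rw [if_neg h1]
        · rw [if_neg h2, Polynomial.coeff_zero]
      · intro h
        exact absurd (Finset.mem_univ p₀) h
    rw [hq0] at hc
    simp at hc
    exact hp₀ hc.symm
  · rw [Polynomial.eval₂_finset_sum]
    rw [← hsumR]
    congr 1
    funext p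
    rw [Polynomial.eval₂_monomial]
    simp only [Polynomial.coe_eval₂RingHom, Polynomial.eval₂_monomial]
    rw [Algebra.smul_def, mul_assoc]

lemma exists_pos (ρ σ : NearWeight F R) [Nontrivial R]
    (hfin : (Hset ρ σ Set.univ)ᶜ.Finite) :
    ∃ f : R, f ≠ 0 ∧ ρ.w 1 < ρ.w f ∧ σ.w 1 < σ.w f := by
  have hex : ∃ n : ℕ, ((n+1, n+1) : ℕ × ℕ) ∈ Hset ρ σ Set.univ := by
    by_contra h
    push_neg at h
    have hsub : Set.range (fun n : ℕ => ((n+1, n+1) : ℕ × ℕ)) ⊆ (Hset ρ σ Set.univ)ᶜ := by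
      rintro _ ⟨n, rfl⟩
      exact h n
    have hinj : Function.Injective (fun n : ℕ => ((n+1, n+1) : ℕ × ℕ)) := by
      intro x y hxy
      simpa [Prod.ext_iff] using hxy
    exact Set.infinite_range_of_injective hinj (hfin.subset hsub)
  obtain ⟨n, f, -, hf0, heq⟩ := hex
  have h1 : ρ.nval f = n + 1 ∧ σ.nval f = n + 1 := by
    simpa [Prod.ext_iff] using heq
  refine ⟨f, hf0, ?_, ?_⟩
  · rw [w_one, w_eq_nval ρ hf0, h1.1]
    exact wb_zero_lt_coe n.succ_pos
  · rw [w_one, w_eq_nval σ hf0, h1.2]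
    exact wb_zero_lt_coe n.succ_pos

lemma not_isField (ρ σ : NearWeight F R) [IsDomain R]
    (hfin : (Hset ρ σ Set.univ)ᶜ.Finite)
    (hU : ρ.U ∩ σ.U = Set.range (algebraMap F R)) : ¬ IsField R := by
  intro hfield
  obtain ⟨f, hf0, hρ, hσ⟩ := exists_pos ρ σ hfin
  obtain ⟨g, hfg⟩ := hfield.mul_inv_cancel hf0
  have hg0 : g ≠ 0 := by
    rintro rfl
    rw [mul_zero] at hfg
    exact zero_ne_one hfg
  have hUg : ∀ τ : NearWeight F R, τ.w 1 < τ.w f → τ.w g ≤ τ.w 1 := by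
    intro τ hτ
    by_contra hlt
    push_neg at hlt
    have h5 := τ.N5' f g hτ hlt
    rw [hfg, w_one] at h5
    rw [w_eq_nval τ hf0, w_eq_nval τ hg0, ← Nat.cast_add] at h5
    have hnf : 1 ≤ τ.nval f := nval_pos τ hτ
    exact (ne_of_lt (wb_zero_lt_coe (show 0 < τ.nval f + τ.nval g by omega))) h5
  have hgmem : g ∈ ρ.U ∩ σ.U := ⟨hUg ρ hρ, hUg σ hσ⟩
  rw [hU] at hgmem
  obtain ⟨c, hc⟩ := hgmem
  have hc0 : c ≠ 0 := by
    rintro rfl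
    rw [map_zero] at hc
    exact hg0 hc.symm
  have h1 : algebraMap F R c * algebraMap F R c⁻¹ = 1 := by
    rw [← map_mul, mul_inv_cancel₀ hc0, map_one]
  have hf : f = algebraMap F R c⁻¹ := by
    calc f = f * (algebraMap F R c * algebraMap F R c⁻¹) := by rw [h1, mul_one]
      _ = (f * g) * algebraMap F R c⁻¹ := by rw [← hc]; ring
      _ = algebraMap F R c⁻¹ := by rw [hfg, one_mul]
  have h2 : ρ.w (algebraMap F R c⁻¹) = ρ.w 1 := by
    rw [Algebra.algebraMap_eq_smul_one]
    exact ρ.N1 _ _ (inv_ne_zero hc0)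
  rw [hf, h2] at hρ
  exact lt_irrefl _ hρ

lemma isMaximal_of_prime (ρ σ : NearWeight F R) [IsDomain R]
    (hU : ρ.U ∩ σ.U = Set.range (algebraMap F R))
    (p : Ideal R) (hp : p.IsPrime) (hbot : p ≠ ⊥) : p.IsMaximal := by
  haveI := hp
  refine Ideal.Quotient.maximal_of_isField p ?_
  obtain ⟨a, hap, ha0⟩ := (Submodule.ne_bot_iff p).mp hbot
  refine ⟨exists_pair_ne _, mul_comm, ?_⟩
  intro β hβ0
  obtain ⟨b, rfl⟩ := Ideal.Quotient.mk_surjective β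
  have hbp : b ∉ p := fun h => hβ0 (Ideal.Quotient.eq_zero_iff_mem.mpr h)
  have hb0 : b ≠ 0 := fun h => hbp (h ▸ p.zero_mem)
  obtain ⟨q, hq0, hqe⟩ := depend ρ σ hU ha0 hb0
  have hCXnu : ¬ IsUnit (Polynomial.C (Polynomial.X : Polynomial F)) := by
    rw [Polynomial.isUnit_C]
    exact Polynomial.not_isUnit_X
  obtain ⟨q₂, hq2, hndvd⟩ :=
    (FiniteMultiplicity.of_not_isUnit hCXnu hq0).exists_eq_pow_mul_and_not_dvd
  set E := Polynomial.eval₂RingHom (algebraMap F R) a with hE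
  have hq2e : Polynomial.eval₂ E b q₂ = 0 := by
    rw [hq2, Polynomial.eval₂_mul, Polynomial.eval₂_pow, Polynomial.eval₂_C] at hqe
    have hEX : E Polynomial.X = a := by
      rw [hE, Polynomial.coe_eval₂RingHom, Polynomial.eval₂_X]
    rw [hEX] at hqe
    exact (mul_eq_zero.mp hqe).resolve_left (pow_ne_zero _ ha0)
  have hq20 : q₂ ≠ 0 := fun h => hq0 (by rw [hq2, h, mul_zero])
  set π := Ideal.Quotient.mk p with hπ
  set h : F →+* R ⧸ p := π.comp (algebraMap F R) with hh
  have hπa : π a = 0 := Ideal.Quotient.eq_zero_iff_mem.mpr hap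
  have hmod : Polynomial.eval₂ h (π b) (q₂.map Polynomial.constantCoeff) = 0 := by
    have h1 : π (Polynomial.eval₂ E b q₂) = 0 := by rw [hq2e, map_zero]
    rw [Polynomial.hom_eval₂] at h1
    have h2 : π.comp E = (h.comp (Polynomial.constantCoeff : Polynomial F →+* F)) := by
      refine RingHom.ext fun g => ?_
      show π (Polynomial.eval₂ (algebraMap F R) a g) = h (Polynomial.constantCoeff g)
      rw [Polynomial.hom_eval₂, hπa, Polynomial.eval₂_at_zero]
      rfl
    rw [h2, ← Polynomial.eval₂_map] at h1
    exact h1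
  set Q : Polynomial F := q₂.map Polynomial.constantCoeff with hQ
  have hQ0 : Q ≠ 0 := by
    intro h0
    apply hndvd
    rw [Polynomial.C_dvd_iff_dvd_coeff]
    intro i
    rw [Polynomial.X_dvd_iff]
    have hcoe := congrArg (fun r => Polynomial.coeff r i) h0
    simpa [hQ, Polynomial.coeff_map] using hcoe
  have hβb : π b ≠ 0 := hβ0
  obtain ⟨Q₁, hQ1, hQX⟩ :=
    (FiniteMultiplicity.of_not_isUnit (Polynomial.not_isUnit_X (R := F)) hQ0).exists_eq_pow_mul_and_not_dvd
  have hc0 : Q₁.coeff 0 ≠ 0 := fun hcc => hQX (Polynomial.X_dvd_iff.mpr hcc)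
  have hQ1e : Polynomial.eval₂ h (π b) Q₁ = 0 := by
    rw [hQ1, Polynomial.eval₂_mul, Polynomial.eval₂_pow, Polynomial.eval₂_X] at hmod
    exact (mul_eq_zero.mp hmod).resolve_left (pow_ne_zero _ hβb)
  have hdec : Polynomial.X * Q₁.divX + Polynomial.C (Q₁.coeff 0) = Q₁ :=
    Polynomial.X_mul_divX_add Q₁
  have h3 : π b * Polynomial.eval₂ h (π b) Q₁.divX + h (Q₁.coeff 0) = 0 := by
    rw [← hQ1e]
    conv_rhs => rw [← hdec]
    rw [Polynomial.eval₂_add, Polynomial.eval₂_mul, Polynomial.eval₂_X, Polynomial.eval₂_C]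
  refine ⟨-(Polynomial.eval₂ h (π b) Q₁.divX) * h (Q₁.coeff 0)⁻¹, ?_⟩
  have h4 : π b * -(Polynomial.eval₂ h (π b) Q₁.divX) = h (Q₁.coeff 0) := by
    linear_combination -h3
  calc π b * (-(Polynomial.eval₂ h (π b) Q₁.divX) * h (Q₁.coeff 0)⁻¹)
      = (π b * -(Polynomial.eval₂ h (π b) Q₁.divX)) * h (Q₁.coeff 0)⁻¹ := by ring
    _ = h (Q₁.coeff 0) * h (Q₁.coeff 0)⁻¹ := by rw [h4]
    _ = 1 := by rw [← map_mul, mul_inv_cancel₀ hc0, map_one]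

lemma krull_eq_one {R : Type*} [CommRing R] [IsDomain R] (hnf : ¬ IsField R)
    (hmax : ∀ p : Ideal R, p.IsPrime → p ≠ ⊥ → p.IsMaximal) : ringKrullDim R = 1 := by
  obtain ⟨p, hpbot, hpprime⟩ := Ring.not_isField_iff_exists_prime.mp hnf
  apply le_antisymm
  · show Order.krullDim (PrimeSpectrum R) ≤ 1
    have hlen : ∀ s : LTSeries (PrimeSpectrum R), s.length ≤ 1 := by
      intro s
      by_contra hl
      push_neg at hl
      have h01 : s ⟨0, by omega⟩ < s ⟨1, by omega⟩ := s.strictMono (by rw [Fin.mk_lt_mk]; omega)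
      have h12 : s ⟨1, by omega⟩ < s ⟨2, by omega⟩ := s.strictMono (by rw [Fin.mk_lt_mk]; omega)
      have hne : (s ⟨1, by omega⟩).asIdeal ≠ ⊥ := by
        intro hbb
        have hlt01 := (PrimeSpectrum.asIdeal_lt_asIdeal _ _).mpr h01
        rw [hbb] at hlt01
        exact not_lt_bot hlt01
      have hm := hmax (s ⟨1, by omega⟩).asIdeal (s ⟨1, by omega⟩).isPrime hne
      have hlt := (PrimeSpectrum.asIdeal_lt_asIdeal _ _).mpr h12
      exact hlt.ne (hm.eq_of_le (s ⟨2, by omega⟩).isPrime.ne_top hlt.le)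
    show (⨆ (s : LTSeries (PrimeSpectrum R)), (s.length : WithBot ℕ∞)) ≤ 1
    refine iSup_le fun s => ?_
    exact_mod_cast hlen s
  · let P0 : PrimeSpectrum R := ⟨⊥, Ideal.bot_prime⟩
    let P1 : PrimeSpectrum R := ⟨p, hpprime⟩
    have hlt : P0 < P1 := by
      rw [← PrimeSpectrum.asIdeal_lt_asIdeal]
      exact bot_lt_iff_ne_bot.mpr hpbot
    let c : LTSeries (PrimeSpectrum R) := ⟨1, ![P0, P1], by
      intro i
      fin_cases i
      simpa using hlt⟩
    have hc := Order.LTSeries.length_le_krullDim c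
    have hc1 : c.length = 1 := rfl
    rw [hc1] at hc
    simpa [ringKrullDim] using hc

theorem trans_basis (ρ σ : NearWeight F R) [IsDomain R]
    (hfin : (Hset ρ σ Set.univ)ᶜ.Finite)
    (hU : ρ.U ∩ σ.U = Set.range (algebraMap F R)) :
    ∃ x : FractionRing R, IsTranscendenceBasis F (fun _ : Unit => x) := by
  classical
  obtain ⟨f, hf0, hρf, hσf⟩ := exists_pos ρ σ hfin
  have htr : Transcendental F f := transcendental_of_w_pos ρ hρf
  set K := FractionRing R
  have hφinj : Function.Injective (algebraMap R K) := IsFractionRing.injective R K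
  have hainj : Function.Injective ((Polynomial.aeval f : Polynomial F →ₐ[F] R)) :=
    transcendental_iff_injective.mp htr
  letI algPR : Algebra (Polynomial F) R := (Polynomial.aeval f).toRingHom.toAlgebra
  haveI : IsScalarTower (Polynomial F) R K := inferInstance
  have hPKeq : ∀ g : Polynomial F, algebraMap (Polynomial F) K g
      = algebraMap R K (Polynomial.aeval f g) := fun g =>
    IsScalarTower.algebraMap_apply (Polynomial F) R K g
  haveI : Module.IsTorsionFree (Polynomial F) K :=
    Module.isTorsionFree_iff_algebraMap_injective.mpr (by
      intro u v huv
      rw [hPKeq, hPKeq] at huv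
      exact hainj (hφinj huv))
  have hPReq : algebraMap (Polynomial F) R = Polynomial.eval₂RingHom (algebraMap F R) f :=
    RingHom.ext fun g => by
      show Polynomial.aeval f g = Polynomial.eval₂ (algebraMap F R) f g
      rw [Polynomial.aeval_def]
  haveI halgR : Algebra.IsAlgebraic (Polynomial F) R := by
    refine ⟨fun r => ?_⟩
    by_cases hr : r = 0
    · rw [hr]; exact isAlgebraic_zero
    · obtain ⟨q, hq0, hqe⟩ := depend ρ σ hU hf0 hr
      refine ⟨q, hq0, ?_⟩
      rw [Polynomial.aeval_def, hPReq]
      exact hqe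
  haveI halgK : Algebra.IsAlgebraic (Polynomial F) K :=
    (IsFractionRing.isAlgebraic_iff' (Polynomial F) R K).mp halgR
  set x0 : K := algebraMap R K f with hx0
  set B0 : Subalgebra F K := Algebra.adjoin F {x0} with hB0
  have hx0tr : Transcendental F x0 := by
    intro hal
    exact htr ((isAlgebraic_algHom_iff (IsScalarTower.toAlgHom F R K) hφinj).mp hal)
  have hmemB : ∀ g : Polynomial F, Polynomial.aeval x0 g ∈ B0 := fun g => by
    rw [hB0, Algebra.adjoin_singleton_eq_range_aeval]
    exact ⟨g, rfl⟩
  set χ : Polynomial F →ₐ[F] ↥B0 := (Polynomial.aeval x0).codRestrict B0 hmemB with hχ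
  have hχinj : Function.Injective χ := by
    intro u v huv
    exact (transcendental_iff_injective.mp hx0tr) (congrArg Subtype.val huv)
  have hcomm : (algebraMap ↥B0 K).comp χ.toRingHom
      = (RingHom.id K).comp (algebraMap (Polynomial F) K) := by
    refine RingHom.ext fun g => ?_
    show ((χ g : ↥B0) : K) = algebraMap (Polynomial F) K g
    rw [hPKeq]
    show Polynomial.aeval x0 g = algebraMap R K (Polynomial.aeval f g)
    rw [hx0, Polynomial.aeval_algebraMap_apply]
  have halgB0 : ∀ y : K, IsAlgebraic ↥B0 y := by
    intro y
    have hy : IsAlgebraic (Polynomial F) y := Algebra.IsAlgebraic.isAlgebraic y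
    have h2 := hy.ringHom_of_comp_eq χ.toRingHom (RingHom.id K) hχinj hcomm
    simpa using h2
  -- assemble the transcendence basis
  have indep : AlgebraicIndependent F (fun _ : Unit => x0) :=
    algebraicIndependent_unique_type_iff.mpr hx0tr
  refine ⟨x0, indep, ?_⟩
  intro s hs hsub
  have hrange : Set.range (fun _ : Unit => x0) = {x0} := Set.range_const
  rw [hrange] at hsub ⊢
  refine Set.Subset.antisymm hsub ?_
  intro y hy
  rw [Set.mem_singleton_iff]
  by_contra hne
  have hopt : AlgebraicIndependent F (fun o : Option Unit => o.elim y (fun _ : Unit => x0)) := by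
    let j : Option Unit → s := fun o => o.elim ⟨y, hy⟩ (fun _ => ⟨x0, hsub rfl⟩)
    have hjinj : Function.Injective j := by
      intro o1 o2 h12
      cases o1 with
      | none =>
        cases o2 with
        | none => rfl
        | some u => exact absurd (congrArg Subtype.val h12) hne
      | some u =>
        cases o2 with
        | none => exact absurd (congrArg Subtype.val h12).symm hne
        | some v => rfl
    have hcompind := hs.comp j hjinj
    have heq : ((fun (z : s) => (z : K)) ∘ j)
        = fun o : Option Unit => o.elim y (fun _ : Unit => x0) := by
      funext o
      cases o <;> rfl
    convert hcompind using 1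
    exact heq.symm
  have htrans := (indep.option_iff_transcendental y).mp hopt
  have hadj : Algebra.adjoin F (Set.range fun _ : Unit => x0) = B0 := by
    rw [hrange]
  exact htrans (hadj ▸ halgB0 y)

end NearWeightAux

variable {F R : Type*} [Field F] [CommRing R] [Algebra F R]

theorem stmt15 [IsDomain R]
    (hinj : Function.Injective (algebraMap F R))
    (hsur : ¬ Function.Surjective (algebraMap F R))
    (ρ σ : NearWeight F R) (hwa : NearWeight.WellAgreeing ρ σ) :
    (∃ x : FractionRing R, IsTranscendenceBasis F (fun _ : Unit => x)) ∧
    ringKrullDim R = 1 := by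
  obtain ⟨hfin, hU⟩ := hwa
  constructor
  · exact NearWeightAux.trans_basis ρ σ hfin hU
  · exact NearWeightAux.krull_eq_one (NearWeightAux.not_isField ρ σ hfin hU)
      (fun p hp hb => NearWeightAux.isMaximal_of_prime ρ σ hU p hp hb)
end
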